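/- arXiv:1405.6502 — 6 statements merged into one kernel-verified Lean document; each statement's English description precedes it below -/
import Mathlib

section
/- Let T be a compact metric space with a regular σ-additive Borel measure μ, and X a Banach lattice with order-continuous norm. If f: T → X is order-Henstock integrable (i.e., there exist J ∈ X, an (o)-sequence (b_n) decreasing to 0, and gages (γ_n) such that |σ(f,Π) − J| ≤ b_n for every γ_n-fine Henstock partition Π), then f is norm-Henstock integrable and the two integrals coincide. -/
open MeasureTheory Set Filter

/-- A tagged partition of the set `A`: finitely many pairwise disjoint measurable
sets covering `A`, each with a tag point. -/
structure TaggedPart (T : Type*) [MeasurableSpace T] (A : Set T) where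
  k : ℕ
  E : Fin k → Set T
  tag : Fin k → T
  meas : ∀ i, MeasurableSet (E i)
  disj : ∀ i j, i ≠ j → Disjoint (E i) (E j)
  cover : (⋃ i, E i) = A

namespace TaggedPart

variable {T : Type*} [MeasurableSpace T] {A : Set T}

/-- A Henstock partition: each tag belongs to its set. -/
def IsHenstock (P : TaggedPart T A) : Prop := ∀ i, P.tag i ∈ P.E i

/-- `γ`-fineness: each set is within distance `γ (tag)` of its tag. -/
def IsFine [PseudoMetricSpace T] (γ : T → ℝ) (P : TaggedPart T A) : Prop :=
  ∀ i, ∀ w ∈ P.E i, dist w (P.tag i) < γ (P.tag i)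

/-- The Riemann sum `σ(f, P) = ∑ μ(Eᵢ) • f(tᵢ)`. -/
noncomputable def sum {X : Type*} [AddCommMonoid X] [Module ℝ X]
    (P : TaggedPart T A) (f : T → X) (μ : Measure T) : X :=
  ∑ i, (μ (P.E i)).toReal • f (P.tag i)

end TaggedPart

/-- A gage is a strictly positive function. -/
def IsGage {T : Type*} (γ : T → ℝ) : Prop := ∀ t, 0 < γ t

/-- An (o)-sequence: decreasing with infimum `0`. -/
def IsOSeq {X : Type*} [Lattice X] [AddCommGroup X] (b : ℕ → X) : Prop :=
  Antitone b ∧ IsGLB (Set.range b) 0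

section Defs

variable {T : Type*} [MeasurableSpace T] [PseudoMetricSpace T]
  {X : Type*} [NormedAddCommGroup X] [Lattice X] [HasSolidNorm X] [IsOrderedAddMonoid X] [NormedSpace ℝ X]

/-- Order-Henstock integrability of `f` on `A` with integral `J`. -/
def HasOHIntegralOn (f : T → X) (μ : Measure T) (A : Set T) (J : X) : Prop :=
  ∃ b : ℕ → X, IsOSeq b ∧ ∃ γ : ℕ → T → ℝ, (∀ n, IsGage (γ n)) ∧
    ∀ n (P : TaggedPart T A), P.IsHenstock → P.IsFine (γ n) →
      |P.sum f μ - J| ≤ b n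

/-- Order-McShane (free partition) integrability of `f` on `A` with integral `J`. -/
def HasOMIntegralOn (f : T → X) (μ : Measure T) (A : Set T) (J : X) : Prop :=
  ∃ b : ℕ → X, IsOSeq b ∧ ∃ γ : ℕ → T → ℝ, (∀ n, IsGage (γ n)) ∧
    ∀ n (P : TaggedPart T A), P.IsFine (γ n) → |P.sum f μ - J| ≤ b n

/-- Order-McShane integrability with a prescribed regulating (o)-sequence `b`. -/
def HasOMIntegralOnWith (f : T → X) (μ : Measure T) (A : Set T) (J : X)
    (b : ℕ → X) : Prop :=
  ∃ γ : ℕ → T → ℝ, (∀ n, IsGage (γ n)) ∧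
    ∀ n (P : TaggedPart T A), P.IsFine (γ n) → |P.sum f μ - J| ≤ b n

/-- Norm-Henstock integrability of `f` on `A` with integral `J`. -/
def HasNormHIntegralOn (f : T → X) (μ : Measure T) (A : Set T) (J : X) : Prop :=
  ∀ ε : ℝ, 0 < ε → ∃ γ : T → ℝ, IsGage γ ∧
    ∀ P : TaggedPart T A, P.IsHenstock → P.IsFine γ → ‖P.sum f μ - J‖ ≤ ε

/-- Norm-McShane (free partition) integrability of `f` on `A` with integral `J`. -/
def HasNormMIntegralOn (f : T → X) (μ : Measure T) (A : Set T) (J : X) : Prop :=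
  ∀ ε : ℝ, 0 < ε → ∃ γ : T → ℝ, IsGage γ ∧
    ∀ P : TaggedPart T A, P.IsFine γ → ‖P.sum f μ - J‖ ≤ ε

end Defs

theorem order_henstock_implies_norm_henstock {T : Type*} [MetricSpace T] [CompactSpace T] [MeasurableSpace T] [BorelSpace T]
    (μ : Measure T) [IsFiniteMeasure μ] [μ.Regular]
    {X : Type*} [NormedAddCommGroup X] [Lattice X] [HasSolidNorm X] [IsOrderedAddMonoid X] [NormedSpace ℝ X] [CompleteSpace X]
    (hOC : ∀ b : ℕ → X, IsOSeq b → Tendsto (fun n => ‖b n‖) atTop (nhds 0))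
    (f : T → X) (J : X) (hf : HasOHIntegralOn f μ Set.univ J) :
    HasNormHIntegralOn f μ Set.univ J := by
  obtain ⟨b, hb, γ, hγ, hest⟩ := hf
  intro ε hε
  have hlim := hOC b hb
  obtain ⟨n, hn⟩ := (hlim.eventually (eventually_le_nhds hε)).exists
  refine ⟨γ n, hγ n, fun P hH hF => ?_⟩
  have h1 : |P.sum f μ - J| ≤ b n := hest n P hH hF
  have hb0 : (0 : X) ≤ b n := hb.2.1 ⟨n, rfl⟩
  have h2 : |P.sum f μ - J| ≤ |b n| := h1.trans (le_abs_self _)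
  calc ‖P.sum f μ - J‖ ≤ ‖b n‖ := HasSolidNorm.solid h2
    _ ≤ ε := hn
end

section
/- Let T be a compact metric space with a regular σ-additive Borel measure μ and X a Banach lattice. Let f, g: T → X be order-bounded maps (|f| ≤ M and |g| ≤ M for some M ∈ X) with f = g μ-almost everywhere. Then f is order-Henstock integrable if and only if g is, and in that case their integrals coincide. -/
open MeasureTheory Set Filter

section Aux

variable {X : Type*} [NormedAddCommGroup X] [Lattice X] [IsOrderedAddMonoid X] [HasSolidNorm X] [NormedSpace ℝ X]

lemma aux_inv_two_pow_smul_nonneg (k : ℕ) {x : X} (hx : 0 ≤ x) :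
    0 ≤ ((2 : ℝ) ^ k)⁻¹ • x := by
  induction k with
  | zero => simpa using hx
  | succ k ih =>
    apply nsmul_two_semiclosed
    have h2 : (2 : ℕ) • (((2 : ℝ) ^ (k + 1))⁻¹ • x) = ((2 : ℝ) ^ k)⁻¹ • x := by
      rw [← Nat.cast_smul_eq_nsmul ℝ, smul_smul]
      congr 1
      rw [pow_succ]
      push_cast
      field_simp
    rw [h2]; exact ih

lemma aux_smul_nonneg {c : ℝ} (hc : 0 ≤ c) {x : X} (hx : 0 ≤ x) : 0 ≤ c • x := by
  set d : ℕ → ℝ := fun k => (⌈c * 2 ^ k⌉₊ : ℝ) / 2 ^ k with hd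
  have hdk : ∀ k, 0 ≤ d k • x := by
    intro k
    have : d k • x = ⌈c * 2 ^ k⌉₊ • (((2 : ℝ) ^ k)⁻¹ • x) := by
      show ((⌈c * 2 ^ k⌉₊ : ℝ) / 2 ^ k) • x = _
      rw [← Nat.cast_smul_eq_nsmul ℝ, smul_smul, div_eq_mul_inv]
    rw [this]
    exact nsmul_nonneg (aux_inv_two_pow_smul_nonneg k hx) _
  have h2k : ∀ k : ℕ, (0:ℝ) < 2 ^ k := fun k => by positivity
  have hlb : ∀ k, c ≤ d k := by
    intro k
    show c ≤ (⌈c * 2 ^ k⌉₊ : ℝ) / 2 ^ k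
    rw [le_div_iff₀ (h2k k)]
    exact Nat.le_ceil _
  have hub : ∀ k, d k ≤ c + ((1:ℝ)/2) ^ k := by
    intro k
    show (⌈c * 2 ^ k⌉₊ : ℝ) / 2 ^ k ≤ _
    rw [div_le_iff₀ (h2k k)]
    have := (Nat.ceil_lt_add_one (by positivity : (0:ℝ) ≤ c * 2 ^ k)).le
    calc (⌈c * 2 ^ k⌉₊ : ℝ) ≤ c * 2 ^ k + 1 := this
      _ = (c + ((1:ℝ)/2) ^ k) * 2 ^ k := by
          rw [add_mul, one_div, inv_pow, inv_mul_cancel₀ (h2k k).ne']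
  have hdc : Filter.Tendsto d Filter.atTop (nhds c) := by
    have h1 : Filter.Tendsto (fun _ : ℕ => c) Filter.atTop (nhds c) := tendsto_const_nhds
    have h2 : Filter.Tendsto (fun k : ℕ => c + ((1:ℝ)/2) ^ k) Filter.atTop (nhds (c + 0)) :=
      h1.add (tendsto_pow_atTop_nhds_zero_of_lt_one (by norm_num) (by norm_num))
    rw [add_zero] at h2
    exact tendsto_of_tendsto_of_tendsto_of_le_of_le h1 h2 hlb hub
  have hto : Filter.Tendsto (fun k => d k • x) Filter.atTop (nhds (c • x)) :=
    hdc.smul_const x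
  exact ge_of_tendsto' hto hdk

lemma aux_smul_le_smul_left {c : ℝ} (hc : 0 ≤ c) {x y : X} (h : x ≤ y) :
    c • x ≤ c • y :=
  sub_nonneg.1 (by rw [← smul_sub]; exact aux_smul_nonneg hc (sub_nonneg.2 h))

lemma aux_smul_le_smul_right {a b : ℝ} (h : a ≤ b) {x : X} (hx : 0 ≤ x) :
    a • x ≤ b • x :=
  sub_nonneg.1 (by rw [← sub_smul]; exact aux_smul_nonneg (sub_nonneg.2 h) hx)

lemma aux_abs_smul_le {c : ℝ} (hc : 0 ≤ c) (x : X) : |c • x| ≤ c • |x| := by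
  rw [abs_le']
  constructor
  · exact aux_smul_le_smul_left hc (le_abs_self x)
  · rw [← smul_neg]
    exact aux_smul_le_smul_left hc (neg_le_abs x)

lemma aux_abs_sum_le {ι : Type*} (s : Finset ι) (v : ι → X) :
    |∑ i ∈ s, v i| ≤ ∑ i ∈ s, |v i| := by
  classical
  induction s using Finset.cons_induction with
  | empty => simp
  | cons a s ha ih =>
    rw [Finset.sum_cons, Finset.sum_cons]
    calc |v a + ∑ x ∈ s, v x| ≤ |v a| + |∑ x ∈ s, v x| := abs_add_le _ _
      _ ≤ |v a| + ∑ x ∈ s, |v x| := add_le_add_right ih _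

end Aux

section Transfer

set_option maxHeartbeats 1000000 in
lemma oh_transfer {T : Type*} [MetricSpace T] [CompactSpace T] [MeasurableSpace T]
    [BorelSpace T] [Nonempty T]
    (μ : Measure T) [IsFiniteMeasure μ] [μ.Regular]
    {X : Type*} [NormedAddCommGroup X] [Lattice X] [IsOrderedAddMonoid X] [HasSolidNorm X] [NormedSpace ℝ X]
    (f g : T → X) (M : X) (hfM : ∀ t, |f t| ≤ M) (hgM : ∀ t, |g t| ≤ M)
    (hae : f =ᵐ[μ] g) (J : X) (hf : HasOHIntegralOn f μ Set.univ J) :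
    HasOHIntegralOn g μ Set.univ J := by
  classical
  obtain ⟨b, hb, γ, hγ, hP⟩ := hf
  set K := M + M with hK
  have hM0 : 0 ≤ M := (abs_nonneg (f (Classical.arbitrary T))).trans (hfM _)
  have hK0 : 0 ≤ K := add_nonneg hM0 hM0
  have hN : μ {t | f t ≠ g t} = 0 := hae
  have hNlt : ∀ n : ℕ, μ {t | f t ≠ g t} < ENNReal.ofReal (1 / (n + 1 : ℝ)) := by
    intro n; rw [hN]; exact ENNReal.ofReal_pos.2 (by positivity)
  choose U hUN hUopen hUμ using fun n =>
    Set.exists_isOpen_lt_of_lt {t | f t ≠ g t} _ (hNlt n)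
  have hrad : ∀ n (t : T), ∃ ε : ℝ, 0 < ε ∧ (t ∈ U n → Metric.ball t ε ⊆ U n) := by
    intro n t
    by_cases h : t ∈ U n
    · obtain ⟨ε, hε, hball⟩ := Metric.isOpen_iff.1 (hUopen n) t h
      exact ⟨ε, hε, fun _ => hball⟩
    · exact ⟨1, one_pos, fun h' => absurd h' h⟩
  choose r hr0 hrb using hrad
  set γ' : ℕ → T → ℝ := fun n t => min (γ n t) (r n t) with hγ'
  set b' : ℕ → X := fun n => (1 / (n + 1 : ℝ)) • K + b n with hb'
  have hcn : ∀ {m n : ℕ}, m ≤ n →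
      (1 / (n + 1 : ℝ)) • K ≤ (1 / (m + 1 : ℝ)) • K := by
    intro m n h
    apply aux_smul_le_smul_right _ hK0
    apply one_div_le_one_div_of_le (by positivity)
    have : (m:ℝ) ≤ n := Nat.cast_le.2 h
    linarith
  have hcn0 : ∀ n : ℕ, (0:X) ≤ (1 / (n + 1 : ℝ)) • K :=
    fun n => aux_smul_nonneg (by positivity) hK0
  refine ⟨b', ⟨?_, ?_⟩, γ', ?_, ?_⟩
  · -- antitone
    intro m n h
    exact add_le_add (hcn h) (hb.1 h)
  · -- IsGLB
    constructor
    · rintro x ⟨n, rfl⟩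
      exact add_nonneg (hcn0 n) (hb.2.1 ⟨n, rfl⟩)
    · intro ℓ hℓ
      have key : ∀ m : ℕ, ℓ ≤ (1 / (m + 1 : ℝ)) • K := by
        intro m
        have hlow : ℓ - (1 / (m + 1 : ℝ)) • K ∈ lowerBounds (Set.range b) := by
          rintro x ⟨n, rfl⟩
          rcases le_total n m with hnm | hmn
          · have h1 : ℓ ≤ (1 / (m + 1 : ℝ)) • K + b m := hℓ ⟨m, rfl⟩
            have h2 : b m ≤ b n := hb.1 hnm
            calc ℓ - (1 / (m + 1 : ℝ)) • K ≤ b m := by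
                  rwa [sub_le_iff_le_add, add_comm]
              _ ≤ b n := h2
          · have h1 : ℓ ≤ (1 / (n + 1 : ℝ)) • K + b n := hℓ ⟨n, rfl⟩
            have h2 : (1 / (n + 1 : ℝ)) • K ≤ (1 / (m + 1 : ℝ)) • K := hcn hmn
            rw [sub_le_iff_le_add, add_comm]
            exact h1.trans (add_le_add_left h2 (b n))
        have h0 : ℓ - (1 / (m + 1 : ℝ)) • K ≤ 0 := hb.2.2 hlow
        rwa [sub_nonpos] at h0
      have hc : Filter.Tendsto (fun m : ℕ => (1 / (m + 1 : ℝ)) • K)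
          Filter.atTop (nhds 0) := by
        have h1 : Filter.Tendsto (fun m : ℕ => 1 / (m + 1 : ℝ))
            Filter.atTop (nhds 0) := tendsto_one_div_add_atTop_nhds_zero_nat
        simpa using h1.smul_const K
      exact ge_of_tendsto' hc key
  · -- gages
    intro n t
    exact lt_min (hγ n t) (hr0 n t)
  · -- main estimate
    intro n P hH hF
    have hFγ : P.IsFine (γ n) := fun i w hw =>
      lt_of_lt_of_le (hF i w hw) (min_le_left _ _)
    have h1 : |P.sum f μ - J| ≤ b n := hP n P hH hFγ
    have hEsub : ∀ i, f (P.tag i) ≠ g (P.tag i) → P.E i ⊆ U n := by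
      intro i hi w hw
      have htag : P.tag i ∈ U n := hUN n hi
      exact hrb n _ htag
        (Metric.mem_ball.2 (lt_of_lt_of_le (hF i w hw) (min_le_right _ _)))
    set s : Finset (Fin P.k) :=
      Finset.univ.filter (fun i => f (P.tag i) ≠ g (P.tag i)) with hs
    have hsum_le : ∑ i ∈ s, (μ (P.E i)).toReal ≤ 1 / (n + 1 : ℝ) := by
      have h2 : ∑ i ∈ s, μ (P.E i) = μ (⋃ i ∈ s, P.E i) :=
        (measure_biUnion_finset (fun i _ j _ hij => P.disj i j hij)
          (fun i _ => P.meas i)).symm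
      have h3 : μ (⋃ i ∈ s, P.E i) ≤ μ (U n) :=
        measure_mono (Set.iUnion₂_subset fun i hi =>
          hEsub i ((Finset.mem_filter.1 hi).2))
      have h4 : ∑ i ∈ s, μ (P.E i) ≤ ENNReal.ofReal (1 / (n + 1 : ℝ)) :=
        h2 ▸ (h3.trans (hUμ n).le)
      calc ∑ i ∈ s, (μ (P.E i)).toReal
          = (∑ i ∈ s, μ (P.E i)).toReal :=
            (ENNReal.toReal_sum fun i _ => measure_ne_top μ _).symm
        _ ≤ (ENNReal.ofReal (1 / (n + 1 : ℝ))).toReal :=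
            ENNReal.toReal_mono ENNReal.ofReal_ne_top h4
        _ = 1 / (n + 1 : ℝ) := ENNReal.toReal_ofReal (by positivity)
    have hdiff : |P.sum g μ - P.sum f μ| ≤ (1 / (n + 1 : ℝ)) • K := by
      have heq : P.sum g μ - P.sum f μ
          = ∑ i ∈ s, (μ (P.E i)).toReal • (g (P.tag i) - f (P.tag i)) := by
        rw [TaggedPart.sum, TaggedPart.sum, ← Finset.sum_sub_distrib]
        rw [← Finset.sum_subset (Finset.subset_univ s)]
        · exact Finset.sum_congr rfl fun i _ => (smul_sub _ _ _).symm
        · intro i _ hi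
          have : f (P.tag i) = g (P.tag i) := by
            by_contra hne
            exact hi (Finset.mem_filter.2 ⟨Finset.mem_univ i, hne⟩)
          rw [this, sub_self]
      rw [heq]
      calc |∑ i ∈ s, (μ (P.E i)).toReal • (g (P.tag i) - f (P.tag i))|
          ≤ ∑ i ∈ s, |(μ (P.E i)).toReal • (g (P.tag i) - f (P.tag i))| :=
            aux_abs_sum_le _ _
        _ ≤ ∑ i ∈ s, (μ (P.E i)).toReal • K := by
            refine Finset.sum_le_sum fun i _ => ?_
            refine (aux_abs_smul_le ENNReal.toReal_nonneg _).trans ?_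
            refine aux_smul_le_smul_left ENNReal.toReal_nonneg ?_
            calc |g (P.tag i) - f (P.tag i)|
                ≤ |g (P.tag i)| + |f (P.tag i)| := by
                  calc |g (P.tag i) - f (P.tag i)|
                      = |g (P.tag i) + -f (P.tag i)| := by rw [sub_eq_add_neg]
                    _ ≤ |g (P.tag i)| + |-f (P.tag i)| :=
                        abs_add_le (g (P.tag i)) (-f (P.tag i))
                    _ = |g (P.tag i)| + |f (P.tag i)| := by rw [abs_neg]
              _ ≤ M + M := add_le_add (hgM _) (hfM _)
        _ = (∑ i ∈ s, (μ (P.E i)).toReal) • K := (Finset.sum_smul).symm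
        _ ≤ (1 / (n + 1 : ℝ)) • K := aux_smul_le_smul_right hsum_le hK0
    have hsplit : P.sum g μ - J = (P.sum g μ - P.sum f μ) + (P.sum f μ - J) := by
      abel
    rw [hsplit]
    calc |(P.sum g μ - P.sum f μ) + (P.sum f μ - J)|
        ≤ |P.sum g μ - P.sum f μ| + |P.sum f μ - J| := abs_add_le _ _
      _ ≤ (1 / (n + 1 : ℝ)) • K + b n := add_le_add hdiff h1

end Transfer

theorem oH_integrable_ae_eq_of_order_bounded {T : Type*} [MetricSpace T] [CompactSpace T] [MeasurableSpace T] [BorelSpace T]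
    (μ : Measure T) [IsFiniteMeasure μ] [μ.Regular]
    {X : Type*} [NormedAddCommGroup X] [Lattice X] [IsOrderedAddMonoid X] [HasSolidNorm X] [NormedSpace ℝ X] [CompleteSpace X] [NullSingletonClass μ]
    (f g : T → X) (M : X) (hfM : ∀ t, |f t| ≤ M) (hgM : ∀ t, |g t| ≤ M)
    (hae : f =ᵐ[μ] g) (J : X) :
    HasOHIntegralOn f μ Set.univ J ↔ HasOHIntegralOn g μ Set.univ J := by
  rcases isEmpty_or_nonempty T with hT | hT
  · have hfg : f = g := funext fun t => hT.elim t
    rw [hfg]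
  · exact ⟨oh_transfer μ f g M hfM hgM hae J,
      oh_transfer μ g f M hgM hfM hae.symm J⟩
end

section
/- (Cauchy criterion for the order-Henstock integral.) A function f: T → X is order-Henstock integrable if and only if there exist an (o)-sequence (b_n) and a corresponding sequence of gages (γ_n) such that for every n and all γ_n-fine Henstock partitions Π, Π′ of T, one has |σ(f,Π) − σ(f,Π′)| ≤ b_n. -/
open MeasureTheory Set Filter

section Aux
variable {Y : Type*} [Lattice Y] [AddCommGroup Y] [CovariantClass Y Y (· + ·) (· ≤ ·)]

lemma le_add_of_abs_sub_le {x y c : Y} (h : |x - y| ≤ c) : x ≤ y + c := by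
  have h1 := (abs_le'.mp h).1
  calc x = (x - y) + y := by abel
    _ ≤ c + y := add_le_add_left h1 _
    _ = y + c := by abel

lemma le_add_of_abs_sub_le' {x y c : Y} (h : |x - y| ≤ c) : y ≤ x + c :=
  le_add_of_abs_sub_le (abs_sub_comm x y ▸ h)

lemma abs_sub_le_of_le_add {x y c : Y} (h1 : x ≤ y + c) (h2 : y ≤ x + c) : |x - y| ≤ c := by
  rw [abs_le']
  constructor
  · calc x - y ≤ (y + c) - y := sub_le_sub_right h1 _
      _ = c := by abel
  · calc -(x - y) = y - x := by abel
      _ ≤ (x + c) - x := sub_le_sub_right h2 _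
      _ = c := by abel

lemma isOSeq_add {b : ℕ → Y} (hb : IsOSeq b) : IsOSeq (fun n => b n + b n) := by
  obtain ⟨hmono, hlb, hglb⟩ := hb
  refine ⟨fun m n h => add_le_add (hmono h) (hmono h), ?_, ?_⟩
  · rintro x ⟨n, rfl⟩
    have h0 : (0:Y) ≤ b n := hlb ⟨n, rfl⟩
    simpa using add_le_add h0 h0
  · intro c hc
    have h1 : ∀ n, c ≤ b n := by
      intro n
      have h2 : c - b n ≤ 0 := by
        apply hglb
        rintro x ⟨m, rfl⟩
        rw [sub_le_iff_le_add]
        rcases le_total m n with h | h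
        · calc c ≤ b n + b n := hc ⟨n, rfl⟩
            _ ≤ b m + b n := add_le_add_left (hmono h) _
        · calc c ≤ b m + b m := hc ⟨m, rfl⟩
            _ ≤ b m + b n := add_le_add_right (hmono h) _
      exact sub_nonpos.mp h2
    exact hglb (by rintro x ⟨n, rfl⟩; exact h1 n)

end Aux

theorem oH_cauchy_criterion {T : Type*} [MetricSpace T] [CompactSpace T] [MeasurableSpace T] [BorelSpace T]
    (μ : Measure T) [IsFiniteMeasure μ] [μ.Regular]
    {X : Type*} [NormedAddCommGroup X] [Lattice X] [HasSolidNorm X] [IsOrderedAddMonoid X] [NormedSpace ℝ X] [CompleteSpace X]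
    (hDC : ∀ s : Set X, s.Nonempty → BddAbove s → ∃ x, IsLUB s x) (f : T → X) :
    (∃ J : X, HasOHIntegralOn f μ Set.univ J) ↔
      ∃ b : ℕ → X, IsOSeq b ∧ ∃ γ : ℕ → T → ℝ, (∀ n, IsGage (γ n)) ∧
        ∀ n (P P' : TaggedPart T (Set.univ : Set T)),
          P.IsHenstock → P.IsFine (γ n) → P'.IsHenstock → P'.IsFine (γ n) →
            |P.sum f μ - P'.sum f μ| ≤ b n := by
  constructor
  · rintro ⟨J, b, hb, γ, hγ, hbound⟩
    refine ⟨fun n => b n + b n, isOSeq_add hb, γ, hγ, ?_⟩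
    intro n P P' hH hF hH' hF'
    have h1 := hbound n P hH hF
    have h2 := hbound n P' hH' hF'
    have h3 : P.sum f μ - P'.sum f μ = (P.sum f μ - J) + (J - P'.sum f μ) := by abel
    calc |P.sum f μ - P'.sum f μ|
        ≤ |P.sum f μ - J| + |J - P'.sum f μ| := by rw [h3]; exact abs_add_le _ _
      _ = |P.sum f μ - J| + |P'.sum f μ - J| := by rw [abs_sub_comm J]
      _ ≤ b n + b n := add_le_add h1 h2
  · rintro ⟨b, hb, γ0, hγ0, hC⟩
    set γ : ℕ → T → ℝ := fun n t => (Finset.range (n+1)).inf' (by simp) (fun i => γ0 i t)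
      with hγdef
    have hγ : ∀ n, IsGage (γ n) := by
      intro n t
      rw [hγdef]
      simp only [Finset.lt_inf'_iff]
      exact fun i _ => hγ0 i t
    have hfine : ∀ {n m : ℕ}, m ≤ n → ∀ {P : TaggedPart T (Set.univ : Set T)},
        P.IsFine (γ n) → P.IsFine (γ0 m) := by
      intro n m hmn P hP i w hw
      refine lt_of_lt_of_le (hP i w hw) ?_
      exact Finset.inf'_le _ (Finset.mem_range.2 (Nat.lt_succ_of_le hmn))
    have key : ∀ {n m m' : ℕ}, n ≤ m → n ≤ m' →
        ∀ {P P' : TaggedPart T (Set.univ : Set T)},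
        P.IsHenstock → P.IsFine (γ m) → P'.IsHenstock → P'.IsFine (γ m') →
        |P.sum f μ - P'.sum f μ| ≤ b n := by
      intro n m m' hnm hnm' P P' hH hF hH' hF'
      exact hC n P P' hH (hfine hnm hF) hH' (hfine hnm' hF')
    by_cases hex : ∀ n, ∃ P : TaggedPart T (Set.univ : Set T),
        P.IsHenstock ∧ P.IsFine (γ n)
    · choose Q hQH hQF using hex
      set s : ℕ → X := fun n => (Q n).sum f μ with hsdef
      have hlub : ∀ n, ∃ u, IsLUB {x | ∃ m, n ≤ m ∧ s m = x} u := by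
        intro n
        refine hDC _ ⟨s n, n, le_rfl, rfl⟩ ⟨s n + b n, ?_⟩
        rintro x ⟨m, hm, rfl⟩
        exact le_add_of_abs_sub_le
          (key hm le_rfl (hQH m) (hQF m) (hQH n) (hQF n))
      choose u hu using hlub
      have hu_anti : Antitone u := by
        intro n n' h
        refine (hu n').2 ?_
        rintro x ⟨m, hm, rfl⟩
        exact (hu n).1 ⟨m, h.trans hm, rfl⟩
      have hglbu : ∃ J, IsGLB (Set.range u) J := by
        obtain ⟨v, hv⟩ := hDC (Neg.neg '' Set.range u) ⟨-u 0, u 0, ⟨0, rfl⟩, rfl⟩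
          ⟨b 0 - s 0, by
            rintro x ⟨y, ⟨n, rfl⟩, rfl⟩
            have h1 : s 0 ≤ s n + b 0 := le_add_of_abs_sub_le'
              (key (Nat.zero_le n) le_rfl (hQH n) (hQF n) (hQH 0) (hQF 0))
            have h2 : s n ≤ u n := (hu n).1 ⟨n, le_rfl, rfl⟩
            have h3 : s 0 - b 0 ≤ s n := sub_le_iff_le_add.mpr h1
            calc -u n ≤ -s n := neg_le_neg h2
              _ ≤ -(s 0 - b 0) := neg_le_neg h3
              _ = b 0 - s 0 := by abel⟩
        exact ⟨-v, by simpa using hv.neg⟩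
      obtain ⟨J, hJ⟩ := hglbu
      refine ⟨J, b, hb, γ, hγ, ?_⟩
      intro n P hH hF
      refine abs_sub_le_of_le_add ?_ ?_
      · -- P.sum f μ ≤ J + b n
        have hlow : P.sum f μ - b n ∈ lowerBounds (Set.range u) := by
          rintro x ⟨m, rfl⟩
          have h2 : s (max m n) ≤ u (max m n) :=
            (hu (max m n)).1 ⟨max m n, le_rfl, rfl⟩
          have h4 : P.sum f μ - b n ≤ s (max m n) := by
            have h3 : P.sum f μ ≤ s (max m n) + b n := le_add_of_abs_sub_le
              (key le_rfl (le_max_right m n) hH hF (hQH _) (hQF _))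
            exact sub_le_iff_le_add.mpr h3
          exact h4.trans (h2.trans (hu_anti (le_max_left m n)))
        have h5 : P.sum f μ - b n ≤ J := hJ.2 hlow
        calc P.sum f μ = (P.sum f μ - b n) + b n := by abel
          _ ≤ J + b n := add_le_add_left h5 _
      · -- J ≤ P.sum f μ + b n
        have h1 : J ≤ u n := hJ.1 ⟨n, rfl⟩
        have h2 : u n ≤ P.sum f μ + b n := by
          refine (hu n).2 ?_
          rintro x ⟨m, hm, rfl⟩
          exact le_add_of_abs_sub_le (key hm le_rfl (hQH m) (hQF m) hH hF)
        exact h1.trans h2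
    · push_neg at hex
      obtain ⟨n, hn⟩ := hex
      refine ⟨0, b, hb, fun _ => γ n, fun _ => hγ n, ?_⟩
      intro m P hH hF
      exact absurd hF (hn P hH)
end

section
/- (Henstock Lemma for the order integral.) Let f: T → X be order-Henstock integrable. Then there exist an (o)-sequence (b_n) and gages (γ_n) such that for every n and every γ_n-fine Henstock partition Π of T, one has Σ_{E∈Π} Ob_n(f,E) ≤ b_n, where Ob_n(f,E) is the supremum of |σ(f,Π″_E) − σ(f,Π′_E)| over all pairs of γ_n-fine Henstock partitions Π′_E, Π″_E of E. -/
open MeasureTheory Set Filter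

section Aux

variable {T : Type*} [MeasurableSpace T] {A : Set T}

lemma TaggedPart.subset_of_mem (P : TaggedPart T A) (i : Fin P.k) : P.E i ⊆ A := by
  intro x hx
  rw [← P.cover]
  exact Set.mem_iUnion.2 ⟨i, hx⟩

/-- Combine a partition of `A` with partitions of each of its pieces. -/
noncomputable def TaggedPart.combine (P : TaggedPart T A)
    (Q : ∀ i, TaggedPart T (P.E i)) : TaggedPart T A where
  k := Fintype.card (Σ i : Fin P.k, Fin (Q i).k)
  E j := (Q ((Fintype.equivFin _).symm j).1).E ((Fintype.equivFin _).symm j).2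
  tag j := (Q ((Fintype.equivFin _).symm j).1).tag ((Fintype.equivFin _).symm j).2
  meas j := (Q _).meas _
  disj := by
    intro j j' hjj'
    set e := (Fintype.equivFin (Σ i : Fin P.k, Fin (Q i).k))
    have key : ∀ p p' : Σ i : Fin P.k, Fin (Q i).k, p ≠ p' →
        Disjoint ((Q p.1).E p.2) ((Q p'.1).E p'.2) := by
      rintro ⟨i, a⟩ ⟨i', a'⟩ hne
      rcases eq_or_ne i i' with rfl | h1
      · have ha : a ≠ a' := fun h => hne (by rw [h])
        exact (Q i).disj a a' ha
      · exact Set.disjoint_of_subset ((Q i).subset_of_mem a) ((Q i').subset_of_mem a')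
          (P.disj i i' h1)
    exact key _ _ (fun h => hjj' (e.symm.injective h))
  cover := by
    set e := (Fintype.equivFin (Σ i : Fin P.k, Fin (Q i).k))
    ext x
    simp only [Set.mem_iUnion]
    constructor
    · rintro ⟨j, hj⟩
      exact P.subset_of_mem _ ((Q _).subset_of_mem _ hj)
    · intro hx
      rw [← P.cover] at hx
      obtain ⟨i, hi⟩ := Set.mem_iUnion.1 hx
      rw [← (Q i).cover] at hi
      obtain ⟨a, ha⟩ := Set.mem_iUnion.1 hi
      refine ⟨e ⟨i, a⟩, ?_⟩
      show x ∈ (fun p : Σ i : Fin P.k, Fin (Q i).k => (Q p.1).E p.2) (e.symm (e ⟨i, a⟩))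
      rw [Equiv.symm_apply_apply]
      exact ha

lemma TaggedPart.combine_isHenstock (P : TaggedPart T A)
    (Q : ∀ i, TaggedPart T (P.E i)) (h : ∀ i, (Q i).IsHenstock) :
    (P.combine Q).IsHenstock := fun _ => h _ _

lemma TaggedPart.combine_isFine [PseudoMetricSpace T] (P : TaggedPart T A)
    (Q : ∀ i, TaggedPart T (P.E i)) (γ : T → ℝ) (h : ∀ i, (Q i).IsFine γ) :
    (P.combine Q).IsFine γ := fun _ w hw => h _ _ w hw

lemma TaggedPart.combine_sum {X : Type*} [AddCommMonoid X] [Module ℝ X]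
    (P : TaggedPart T A) (Q : ∀ i, TaggedPart T (P.E i)) (f : T → X) (μ : Measure T) :
    (P.combine Q).sum f μ = ∑ i, (Q i).sum f μ := by
  unfold TaggedPart.sum TaggedPart.combine
  rw [Equiv.sum_comp (Fintype.equivFin (Σ i : Fin P.k, Fin (Q i).k)).symm
    (fun p : Σ i : Fin P.k, Fin (Q i).k => (μ ((Q p.1).E p.2)).toReal • f ((Q p.1).tag p.2))]
  rw [← Finset.univ_sigma_univ, Finset.sum_sigma]

lemma sum_abs_le_of_signed {X : Type*} [Lattice X] [AddCommGroup X]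
    [CovariantClass X X (· + ·) (· ≤ ·)]
    {ι : Type*} [DecidableEq ι] (s : Finset ι) (x : ι → X) (c : X)
    (h : ∀ ε : ι → Bool, (∑ i ∈ s, if ε i then x i else -x i) ≤ c) :
    ∑ i ∈ s, |x i| ≤ c := by
  induction s using Finset.cons_induction generalizing c with
  | empty => simpa using h (fun _ => true)
  | cons a s ha ih =>
    rw [Finset.sum_cons, abs, sup_add]
    refine sup_le ?_ ?_
    · rw [← le_sub_iff_add_le']
      refine ih _ (fun ε => ?_)
      have := h (Function.update ε a true)
      rw [Finset.sum_cons, Function.update_self] at this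
      rw [le_sub_iff_add_le']
      calc x a + ∑ i ∈ s, (if ε i then x i else -x i)
          = (if True then x a else -x a) +
            ∑ i ∈ s, (if Function.update ε a true i then x i else -x i) := by
            simp only [if_true]
            congr 1
            refine Finset.sum_congr rfl (fun i hi => ?_)
            rw [Function.update_of_ne (ne_of_mem_of_not_mem hi ha)]
        _ ≤ c := by simpa using this
    · rw [← le_sub_iff_add_le']
      refine ih _ (fun ε => ?_)
      have := h (Function.update ε a false)
      rw [Finset.sum_cons, Function.update_self] at this
      rw [le_sub_iff_add_le']
      calc -x a + ∑ i ∈ s, (if ε i then x i else -x i)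
          = (if False then x a else -x a) +
            ∑ i ∈ s, (if Function.update ε a false i then x i else -x i) := by
            simp only [if_false]
            congr 1
            refine Finset.sum_congr rfl (fun i hi => ?_)
            rw [Function.update_of_ne (ne_of_mem_of_not_mem hi ha)]
        _ ≤ c := by simpa using this

end Aux

theorem oH_henstock_lemma_oscillation {T : Type*} [MetricSpace T] [CompactSpace T] [MeasurableSpace T] [BorelSpace T]
    (μ : Measure T) [IsFiniteMeasure μ] [μ.Regular]
    {X : Type*} [NormedAddCommGroup X] [Lattice X] [HasSolidNorm X] [IsOrderedAddMonoid X] [NormedSpace ℝ X] [CompleteSpace X]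
    (hDC : ∀ s : Set X, s.Nonempty → BddAbove s → ∃ x, IsLUB s x) (f : T → X) (J : X)
    (hf : HasOHIntegralOn f μ Set.univ J) :
    ∃ b : ℕ → X, IsOSeq b ∧ ∃ γ : ℕ → T → ℝ, (∀ n, IsGage (γ n)) ∧
      ∀ n (P : TaggedPart T (Set.univ : Set T)), P.IsHenstock → P.IsFine (γ n) →
        ∀ (P' P'' : ∀ i : Fin P.k, TaggedPart T (P.E i)),
          (∀ i, (P' i).IsHenstock) → (∀ i, (P' i).IsFine (γ n)) →
          (∀ i, (P'' i).IsHenstock) → (∀ i, (P'' i).IsFine (γ n)) →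
          ∑ i, |(P'' i).sum f μ - (P' i).sum f μ| ≤ b n := by
  obtain ⟨b, hb, γ, hγ, hint⟩ := hf
  refine ⟨fun n => b n + b n, ⟨fun n m hnm => add_le_add (hb.1 hnm) (hb.1 hnm), ?_⟩,
    γ, hγ, ?_⟩
  · constructor
    · rintro _ ⟨n, rfl⟩
      exact add_nonneg (hb.2.1 ⟨n, rfl⟩) (hb.2.1 ⟨n, rfl⟩)
    · intro c hc
      have hcb : ∀ m, c ≤ b m := by
        intro m
        have h1 : c - b m ≤ 0 := by
          refine hb.2.2 ?_
          rintro _ ⟨n, rfl⟩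
          have h2 : c ≤ b n + b m :=
            (hc ⟨max n m, rfl⟩).trans
              (add_le_add (hb.1 (le_max_left _ _)) (hb.1 (le_max_right _ _)))
          exact sub_le_iff_le_add.2 h2
        exact (sub_nonpos.mp h1).trans le_rfl
      exact hb.2.2 (by rintro _ ⟨m, rfl⟩; exact hcb m)
  · intro n P hPH hPF P' P'' h'H h'F h''H h''F
    classical
    refine sum_abs_le_of_signed Finset.univ _ _ (fun ε => ?_)
    set QA : ∀ i : Fin P.k, TaggedPart T (P.E i) :=
      fun i => if ε i then P'' i else P' i with hQA
    set QB : ∀ i : Fin P.k, TaggedPart T (P.E i) :=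
      fun i => if ε i then P' i else P'' i with hQB
    have hsum : (∑ i, if ε i then (P'' i).sum f μ - (P' i).sum f μ
        else -((P'' i).sum f μ - (P' i).sum f μ))
        = (P.combine QA).sum f μ - (P.combine QB).sum f μ := by
      rw [TaggedPart.combine_sum, TaggedPart.combine_sum, ← Finset.sum_sub_distrib]
      refine Finset.sum_congr rfl (fun i _ => ?_)
      by_cases h : ε i <;> simp [hQA, hQB, h]
    rw [hsum]
    have hA : |(P.combine QA).sum f μ - J| ≤ b n := by
      refine hint n _ (P.combine_isHenstock _ ?_) (P.combine_isFine _ _ ?_)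
      · intro i; by_cases h : ε i <;> simp [hQA, h, h''H i, h'H i]
      · intro i; by_cases h : ε i <;> simp [hQA, h, h''F i, h'F i]
    have hB : |(P.combine QB).sum f μ - J| ≤ b n := by
      refine hint n _ (P.combine_isHenstock _ ?_) (P.combine_isFine _ _ ?_)
      · intro i; by_cases h : ε i <;> simp [hQB, h, h''H i, h'H i]
      · intro i; by_cases h : ε i <;> simp [hQB, h, h''F i, h'F i]
    calc (P.combine QA).sum f μ - (P.combine QB).sum f μ
        = ((P.combine QA).sum f μ - J) - ((P.combine QB).sum f μ - J) := (sub_sub_sub_cancel_right ((P.combine QA).sum f μ) ((P.combine QB).sum f μ) J).symm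
      _ ≤ |(P.combine QA).sum f μ - J| + |(P.combine QB).sum f μ - J| := by
          refine (le_abs_self _).trans ?_
          rw [sub_eq_add_neg]
          exact (abs_add_le _ _).trans_eq (by rw [abs_neg])
      _ ≤ b n + b n := add_le_add hA hB
end

section
/- If f: T → X is order-Henstock integrable, then |f| (the pointwise lattice modulus of f) is also order-Henstock integrable. -/
open MeasureTheory Set Filter

section LatAux
variable {X : Type*} [NormedAddCommGroup X] [Lattice X] [IsOrderedAddMonoid X] [HasSolidNorm X]

lemma half_nn {y : X} (h : 0 ≤ y + y) : 0 ≤ y := by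
  have e1 : y ⊓ 0 + y ⊓ 0 = (y + y) ⊓ (y ⊓ 0) := by
    calc y ⊓ 0 + y ⊓ 0 = (y + y ⊓ 0) ⊓ (0 + y ⊓ 0) := by rw [inf_add]
    _ = ((y + y) ⊓ (y + 0)) ⊓ (y ⊓ 0) := by rw [add_inf, zero_add]
    _ = (y + y) ⊓ (y ⊓ (y ⊓ 0)) := by rw [add_zero, inf_assoc]
    _ = (y + y) ⊓ (y ⊓ 0) := by rw [← inf_assoc y y 0, inf_idem]
  have e3 : (0:X) ⊓ (y ⊓ 0) = y ⊓ 0 := inf_eq_right.2 inf_le_right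
  have e2 : y ⊓ 0 ≤ y ⊓ 0 + y ⊓ 0 := by
    rw [e1]
    calc y ⊓ 0 = 0 ⊓ (y ⊓ 0) := e3.symm
    _ ≤ (y + y) ⊓ (y ⊓ 0) := inf_le_inf_right _ h
  have h4 : (0:X) ≤ y ⊓ 0 := (le_add_iff_nonneg_left _).1 e2
  exact inf_eq_right.1 (le_antisymm inf_le_right h4)

lemma pow2_nn : ∀ (k : ℕ) {y : X}, 0 ≤ (2^k : ℕ) • y → 0 ≤ y := by
  intro k
  induction k with
  | zero => intro y h; simpa using h
  | succ k ih =>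
    intro y h
    apply ih
    apply half_nn
    rw [← two_nsmul, ← mul_nsmul', ← pow_succ']
    exact h

variable [NormedSpace ℝ X]

lemma smul_nn {r : ℝ} (hr : 0 ≤ r) {x : X} (hx : 0 ≤ x) : 0 ≤ r • x := by
  have key : ∀ k : ℕ, 0 ≤ ((⌊r * 2^k⌋₊ : ℝ) / 2^k) • x := by
    intro k
    apply pow2_nn k
    have h2 : ((2:ℝ)^k) ≠ 0 := by positivity
    rw [← Nat.cast_smul_eq_nsmul ℝ, smul_smul]
    push_cast
    rw [mul_comm, div_mul_cancel₀ _ h2, Nat.cast_smul_eq_nsmul]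
    exact nsmul_nonneg hx _
  have h2 : ∀ k : ℕ, (0:ℝ) < 2^k := fun k => by positivity
  have hup : ∀ k : ℕ, (⌊r * 2^k⌋₊ : ℝ) / 2^k ≤ r := by
    intro k
    rw [div_le_iff₀ (h2 k)]
    exact Nat.floor_le (by positivity)
  have hlow : ∀ k : ℕ, r - (1/2)^k ≤ (⌊r * 2^k⌋₊ : ℝ) / 2^k := by
    intro k
    have h3 : r * 2^k - 1 ≤ (⌊r * 2^k⌋₊ : ℝ) := (Nat.sub_one_lt_floor _).le
    calc r - (1/2)^k = (r * 2^k - 1)/2^k := by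
          rw [div_pow, one_pow, sub_div, mul_div_cancel_right₀ _ (ne_of_gt (h2 k)), one_div]
    _ ≤ (⌊r * 2^k⌋₊ : ℝ) / 2^k := by gcongr
  have hq : Filter.Tendsto (fun k : ℕ => ((⌊r * 2^k⌋₊ : ℝ) / 2^k)) Filter.atTop (nhds r) := by
    have hl : Filter.Tendsto (fun k : ℕ => r - (1/2:ℝ)^k) Filter.atTop (nhds r) := by
      have := (tendsto_pow_atTop_nhds_zero_of_lt_one (by norm_num : (0:ℝ) ≤ 1/2) (by norm_num)).const_sub r
      simpa using this
    exact tendsto_of_tendsto_of_tendsto_of_le_of_le hl tendsto_const_nhds hlow hup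
  exact isClosed_nonneg.mem_of_tendsto (hq.smul_const x) (Filter.Eventually.of_forall key)

lemma smul_mono' {r : ℝ} (hr : 0 ≤ r) {x y : X} (h : x ≤ y) : r • x ≤ r • y := by
  have := smul_nn hr (sub_nonneg.2 h)
  rw [smul_sub] at this
  exact sub_nonneg.1 this

lemma abs_smul_le' {r : ℝ} (hr : 0 ≤ r) (x : X) : |r • x| ≤ r • |x| := by
  apply sup_le
  · exact smul_mono' hr (le_abs_self x)
  · rw [← smul_neg]; exact smul_mono' hr (neg_le_abs x)

lemma smul_abs_eq {r : ℝ} (hr : 0 ≤ r) (x : X) : r • |x| = |r • x| := by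
  rcases hr.eq_or_lt with h | h
  · simp [← h]
  · refine le_antisymm ?_ (abs_smul_le' hr x)
    have h1 : |x| ≤ r⁻¹ • |r • x| := by
      have := abs_smul_le' (le_of_lt (inv_pos.2 h)) (r • x)
      rw [smul_smul, inv_mul_cancel₀ (ne_of_gt h), one_smul] at this
      exact this
    calc r • |x| ≤ r • (r⁻¹ • |r • x|) := smul_mono' hr h1
    _ = |r • x| := by rw [smul_smul, mul_inv_cancel₀ (ne_of_gt h), one_smul]

end LatAux

section MoreAux
variable {X : Type*} [NormedAddCommGroup X] [Lattice X] [IsOrderedAddMonoid X] [HasSolidNorm X]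

lemma sub_le_abs_add_abs (a b : X) : a - b ≤ |a| + |b| := by
  calc a - b ≤ |a| - b := sub_le_sub_right (le_abs_self a) b
  _ = |a| + -b := sub_eq_add_neg _ _
  _ ≤ |a| + |b| := add_le_add_right (neg_le_abs b) _

lemma osq_nsmul {b : ℕ → X} (hb : IsOSeq b) (m : ℕ) :
    IsGLB (Set.range fun n => m • b n) 0 := by
  have hbnn : ∀ n, 0 ≤ b n := fun n => hb.2.1 ⟨n, rfl⟩
  induction m with
  | zero =>
    constructor
    · rintro x ⟨n, rfl⟩; simp
    · intro c hc; exact hc ⟨0, by simp⟩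
  | succ m ih =>
    constructor
    · rintro x ⟨n, rfl⟩
      exact nsmul_nonneg (hbnn n) _
    · intro c hc
      have key : ∀ j, c - b j ∈ lowerBounds (Set.range fun n => m • b n) := by
        rintro j x ⟨n, rfl⟩
        have h1 : c ≤ (m+1) • b (max n j) := hc ⟨max n j, rfl⟩
        have h2 : (m+1) • b (max n j) = m • b (max n j) + b (max n j) := succ_nsmul _ _
        have h3 : m • b (max n j) ≤ m • b n := nsmul_le_nsmul_right (hb.1 (le_max_left n j)) m
        have h4 : b (max n j) ≤ b j := hb.1 (le_max_right n j)
        rw [h2] at h1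
        have h7 : c ≤ m • b n + b j := h1.trans (add_le_add h3 h4)
        exact sub_le_iff_le_add.2 h7
      have h5 : ∀ j, c - b j ≤ 0 := fun j => ih.2 (key j)
      have h6 : c ∈ lowerBounds (Set.range b) := by
        rintro x ⟨j, rfl⟩
        exact sub_nonpos.1 (h5 j)
      exact hb.2.2 h6

lemma sum_abs_le_of_signs {ι : Type*} [DecidableEq ι] (x : ι → X) (s : Finset ι) :
    ∀ c : X, (∀ ε : ι → Bool, (∑ i ∈ s, (if ε i then x i else -x i)) ≤ c) →
    (∑ i ∈ s, |x i|) ≤ c := by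
  induction s using Finset.induction_on with
  | empty => intro c h; simpa using h (fun _ => true)
  | insert _ _ ha ih =>
    rename_i a s
    intro c h
    rw [Finset.sum_insert ha]
    have key : ∀ v : Bool, (if v then x a else -x a) + (∑ i ∈ s, |x i|) ≤ c := by
      intro v
      rw [add_comm, ← le_sub_iff_add_le]
      apply ih
      intro ε
      rw [le_sub_iff_add_le, add_comm]
      have := h (fun i => if i = a then v else ε i)
      rw [Finset.sum_insert ha] at this
      simp only [if_pos rfl, if_true] at this
      convert this using 2
      · exact (Finset.sum_congr rfl (fun i hi => by
          have : i ≠ a := fun e => ha (e ▸ hi)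
          simp [this])).symm
    have h1 := key true
    have h2 := key false
    simp only [if_pos, if_neg] at h1 h2
    have : |x a| ≤ c - (∑ i ∈ s, |x i|) :=
      sup_le (le_sub_iff_add_le.2 h1) (le_sub_iff_add_le.2 h2)
    exact add_le_of_le_sub_right this

end MoreAux

section Cousin
variable {T : Type*} [MetricSpace T] [CompactSpace T] [MeasurableSpace T] [BorelSpace T]

lemma cousin (γ : T → ℝ) (hγ : IsGage γ) :
    ∃ P : TaggedPart T (Set.univ : Set T), P.IsHenstock ∧ P.IsFine γ := by
  classical
  obtain ⟨s, hs⟩ := isCompact_univ.elim_finite_subcover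
    (fun t : T => Metric.ball t (γ t)) (fun t => Metric.isOpen_ball)
    (fun x _ => mem_iUnion.2 ⟨x, Metric.mem_ball_self (hγ x)⟩)
  set k := s.card with hk
  set t : Fin k → T := fun i => ((s.equivFin.symm i : { x // x ∈ s }) : T) with ht
  have htinj : Function.Injective t := fun i j h =>
    s.equivFin.symm.injective (Subtype.ext h)
  have htmem : ∀ i, t i ∈ s := fun i => (s.equivFin.symm i).2
  set C : Fin k → Set T := fun i =>
    Metric.ball (t i) (γ (t i)) \ ⋃ (j : Fin k) (_ : j < i), Metric.ball (t j) (γ (t j)) with hC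
  set E : Fin k → Set T := fun i => insert (t i) (C i \ ↑s) with hE
  have hCb : ∀ i, C i ⊆ Metric.ball (t i) (γ (t i)) := fun i => diff_subset
  have hmeas : ∀ i, MeasurableSet (E i) := by
    intro i
    apply MeasurableSet.insert
    apply MeasurableSet.diff _ s.measurableSet
    exact measurableSet_ball.diff
      (MeasurableSet.iUnion fun j => MeasurableSet.iUnion fun _ => measurableSet_ball)
  have hCdisj : ∀ i j, i ≠ j → Disjoint (C i) (C j) := by
    intro i j hne
    rcases lt_or_gt_of_ne hne with h | h
    · rw [Set.disjoint_right]
      intro x hxj hxi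
      exact hxj.2 (mem_iUnion.2 ⟨i, mem_iUnion.2 ⟨h, hCb i hxi⟩⟩)
    · rw [Set.disjoint_left]
      intro x hxi hxj
      exact hxi.2 (mem_iUnion.2 ⟨j, mem_iUnion.2 ⟨h, hCb j hxj⟩⟩)
  have hdisj : ∀ i j, i ≠ j → Disjoint (E i) (E j) := by
    intro i j hne
    rw [Set.disjoint_left]
    rintro x (rfl | hx)
    · rintro (h | hxj)
      · exact hne (htinj h)
      · exact hxj.2 (htmem i)
    · rintro (rfl | hxj)
      · exact hx.2 (htmem j)
      · exact Set.disjoint_left.1 (hCdisj i j hne) hx.1 hxj.1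
  have hcov : (⋃ i, E i) = Set.univ := by
    apply Set.eq_univ_of_forall
    intro x
    by_cases hxs : x ∈ s
    · have : t (s.equivFin ⟨x, hxs⟩) = x := by
        simp only [ht]
        rw [Equiv.symm_apply_apply]
      exact mem_iUnion.2 ⟨s.equivFin ⟨x, hxs⟩, Set.mem_insert_iff.2 (Or.inl this.symm)⟩
    · have hxb : ∃ i, x ∈ Metric.ball (t i) (γ (t i)) := by
        have := hs (mem_univ x)
        rw [mem_iUnion₂] at this
        obtain ⟨y, hy, hxy⟩ := this
        exact ⟨s.equivFin ⟨y, hy⟩, by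
          have : t (s.equivFin ⟨y, hy⟩) = y := by simp only [ht]; rw [Equiv.symm_apply_apply]
          rw [this]; exact hxy⟩
      set I : Finset (Fin k) := Finset.univ.filter (fun i => x ∈ Metric.ball (t i) (γ (t i)))
      have hI : I.Nonempty := ⟨hxb.choose, Finset.mem_filter.2 ⟨Finset.mem_univ _, hxb.choose_spec⟩⟩
      set i0 := I.min' hI
      have hi0 : x ∈ Metric.ball (t i0) (γ (t i0)) := (Finset.mem_filter.1 (I.min'_mem hI)).2
      have hC0 : x ∈ C i0 := by
        refine ⟨hi0, ?_⟩
        intro hmem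
        rw [mem_iUnion] at hmem
        obtain ⟨j, hj⟩ := hmem
        rw [mem_iUnion] at hj
        obtain ⟨hji, hjb⟩ := hj
        have : j ∈ I := Finset.mem_filter.2 ⟨Finset.mem_univ _, hjb⟩
        exact absurd (I.min'_le j this) (not_le.2 hji)
      exact mem_iUnion.2 ⟨i0, mem_insert_of_mem _ ⟨hC0, hxs⟩⟩
  refine ⟨⟨k, E, t, hmeas, hdisj, hcov⟩, ?_, ?_⟩
  · intro i; exact mem_insert _ _
  · rintro i w (rfl | hw)
    · simpa using hγ (t i)
    · exact Metric.mem_ball.1 (hCb i hw.1)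
end Cousin

section FiberSum
variable {T : Type*} [MeasurableSpace T] {μ : Measure T} [IsFiniteMeasure μ]
  {X : Type*} [AddCommMonoid X] [Module ℝ X]

lemma fiber_sum {ι : Type*} [Fintype ι] [DecidableEq ι] {K : ℕ} (B : ι → Set T) (hmeas : ∀ p, MeasurableSet (B p))
    (hdisj : ∀ p q, p ≠ q → Disjoint (B p) (B q)) (ind : ι → Fin K)
    (F : Fin K → Set T)
    (hF : ∀ i, F i = ⋃ p ∈ Finset.univ.filter (fun p => ind p = i), B p)
    (g : Fin K → X) :
    ∑ i, (μ (F i)).toReal • g i = ∑ p, (μ (B p)).toReal • g (ind p) := by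
  classical
  have hμ : ∀ i, (μ (F i)).toReal = ∑ p ∈ Finset.univ.filter (fun p => ind p = i), (μ (B p)).toReal := by
    intro i
    rw [hF i, measure_biUnion_finset]
    · exact ENNReal.toReal_sum (fun p _ => measure_ne_top μ _)
    · intro p _ q _ hpq
      exact hdisj p q hpq
    · intro p _; exact hmeas p
  calc ∑ i, (μ (F i)).toReal • g i
      = ∑ i, ∑ p ∈ Finset.univ.filter (fun p => ind p = i), (μ (B p)).toReal • g i := by
        refine Finset.sum_congr rfl (fun i _ => ?_)
        rw [hμ i, Finset.sum_smul]
    _ = ∑ i, ∑ p ∈ Finset.univ.filter (fun p => ind p = i), (μ (B p)).toReal • g (ind p) := by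
        refine Finset.sum_congr rfl (fun i _ => Finset.sum_congr rfl (fun p hp => ?_))
        rw [(Finset.mem_filter.1 hp).2]
    _ = ∑ p, (μ (B p)).toReal • g (ind p) := by
        rw [← Finset.sum_fiberwise Finset.univ ind (fun p => (μ (B p)).toReal • g (ind p))]
end FiberSum

section Merge
variable {T : Type*} [MeasurableSpace T] [PseudoMetricSpace T]
  {X : Type*} [AddCommMonoid X] [Module ℝ X]
  {μ : Measure T} [IsFiniteMeasure μ]

lemma merge_part {ι : Type*} [Fintype ι] [DecidableEq ι] (B : ι → Set T) (χ : ι → T)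
    (hmeas : ∀ p, MeasurableSet (B p)) (hdisj : ∀ p q, p ≠ q → Disjoint (B p) (B q))
    (hcov : (⋃ p, B p) = Set.univ) (γ : T → ℝ)
    (hfine : ∀ p, ∀ w ∈ B p, dist w (χ p) < γ (χ p))
    (hvalid : ∀ p, ∃ q, χ q = χ p ∧ χ q ∈ B q) (f : T → X) :
    ∃ P : TaggedPart T (Set.univ : Set T), P.IsHenstock ∧ P.IsFine γ ∧
      P.sum f μ = ∑ p, (μ (B p)).toReal • f (χ p) := by
  classical
  set s : Finset T := Finset.image χ Finset.univ with hsdef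
  set K := s.card with hK
  set z : Fin K → T := fun i => ((s.equivFin.symm i : { x // x ∈ s }) : T) with hz
  have hzinj : Function.Injective z := fun i j h => s.equivFin.symm.injective (Subtype.ext h)
  have hχs : ∀ p, χ p ∈ s := fun p => Finset.mem_image.2 ⟨p, Finset.mem_univ _, rfl⟩
  set ind : ι → Fin K := fun p => s.equivFin ⟨χ p, hχs p⟩ with hind
  have hzind : ∀ p, z (ind p) = χ p := by
    intro p
    simp only [hz, hind]
    rw [Equiv.symm_apply_apply]
  set E : Fin K → Set T := fun i => ⋃ p ∈ Finset.univ.filter (fun p => ind p = i), B p with hE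
  have hmeasE : ∀ i, MeasurableSet (E i) :=
    fun i => Finset.measurableSet_biUnion _ (fun p _ => hmeas p)
  have hdisjE : ∀ i j, i ≠ j → Disjoint (E i) (E j) := by
    intro i j hne
    rw [Set.disjoint_left]
    intro x hxi hxj
    simp only [hE, mem_iUnion] at hxi hxj
    obtain ⟨p, hp, hxp⟩ := hxi
    obtain ⟨q, hq, hxq⟩ := hxj
    rw [Finset.mem_filter] at hp hq
    have hpq : p ≠ q := fun e => hne (hp.2 ▸ hq.2 ▸ e ▸ rfl)
    exact Set.disjoint_left.1 (hdisj p q hpq) hxp hxq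
  have hcovE : (⋃ i, E i) = Set.univ := by
    apply Set.eq_univ_of_forall
    intro x
    have : x ∈ ⋃ p, B p := hcov ▸ mem_univ x
    obtain ⟨p, hp⟩ := mem_iUnion.1 this
    exact mem_iUnion.2 ⟨ind p, by
      simp only [hE, mem_iUnion]
      exact ⟨p, Finset.mem_filter.2 ⟨Finset.mem_univ _, rfl⟩, hp⟩⟩
  refine ⟨⟨K, E, z, hmeasE, hdisjE, hcovE⟩, ?_, ?_, ?_⟩
  · intro i
    have hzs : z i ∈ s := (s.equivFin.symm i).2
    obtain ⟨p0, _, hp0⟩ := Finset.mem_image.1 hzs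
    obtain ⟨q, hq1, hq2⟩ := hvalid p0
    have : ind q = i := by
      apply hzinj
      rw [hzind q, hq1, hp0]
    show z i ∈ E i
    simp only [hE, mem_iUnion]
    refine ⟨q, Finset.mem_filter.2 ⟨Finset.mem_univ _, this⟩, ?_⟩
    rw [← hp0, ← hq1]; exact hq2
  · intro i w hw
    simp only [hE, mem_iUnion] at hw
    obtain ⟨p, hp, hwp⟩ := hw
    have : z i = χ p := by rw [← (Finset.mem_filter.1 hp).2, hzind p]
    show dist w (z i) < γ (z i)
    rw [this]
    exact hfine p w hwp
  · show (∑ i, (μ (E i)).toReal • f (z i)) = _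
    rw [fiber_sum B hmeas hdisj ind E (fun i => rfl) (fun i => f (z i))]
    exact Finset.sum_congr rfl (fun p _ => by rw [hzind p])
end Merge

section Master
open Classical in
lemma master_est {T : Type*} [MetricSpace T] [MeasurableSpace T] [BorelSpace T]
    {X : Type*} [NormedAddCommGroup X] [Lattice X] [IsOrderedAddMonoid X] [HasSolidNorm X] [NormedSpace ℝ X]
    {μ : Measure T} [IsFiniteMeasure μ]
    (f : T → X) (J : X) (γ : T → ℝ) (b2 : X)
    (hb : ∀ R : TaggedPart T (Set.univ : Set T), R.IsHenstock → R.IsFine γ → |R.sum f μ - J| ≤ b2)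
    (P Q : TaggedPart T (Set.univ : Set T)) (hPH : P.IsHenstock) (hPF : P.IsFine γ)
    (hQH : Q.IsHenstock) (hQF : Q.IsFine γ) :
    P.sum (fun t => |f t|) μ - Q.sum (fun t => |f t|) μ ≤ b2+b2 + (b2+b2) + (b2+b2) := by
  classical
  set A : Fin P.k → Fin Q.k → Set T := fun i j => P.E i ∩ Q.E j with hA
  set spl : Fin P.k → Fin Q.k → Prop :=
    fun i j => P.tag i ∈ A i j ∧ Q.tag j ∈ A i j ∧ P.tag i ≠ Q.tag j with hspl
  set B : Fin P.k × Fin Q.k × Bool → Set T := fun p =>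
    if p.2.2 then (if spl p.1 p.2.1 then ({Q.tag p.2.1} : Set T) else ∅)
    else (if spl p.1 p.2.1 then A p.1 p.2.1 \ {Q.tag p.2.1} else A p.1 p.2.1) with hB
  set τ : Fin P.k × Fin Q.k × Bool → T := fun p => P.tag p.1 with hτ
  set σ : Fin P.k × Fin Q.k × Bool → T := fun p => Q.tag p.2.1 with hσ
  have hBfalse : ∀ i j, B (i, j, false) = if spl i j then A i j \ {Q.tag j} else A i j := by
    intro i j
    simp only [hB]
    rfl
  have hBtrue : ∀ i j, B (i, j, true) = if spl i j then ({Q.tag j} : Set T) else ∅ := by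
    intro i j
    simp only [hB]
    rfl
  have hBA : ∀ p, B p ⊆ A p.1 p.2.1 := by
    rintro ⟨i, j, (_|_)⟩
    · rw [hBfalse]
      split
      · exact diff_subset
      · exact subset_rfl
    · rw [hBtrue]
      split
      · rename_i h
        intro w hw
        rw [mem_singleton_iff.1 hw]
        exact h.2.1
      · exact empty_subset _
  have hmeasB : ∀ p, MeasurableSet (B p) := by
    rintro ⟨i, j, (_|_)⟩
    · have hAm : MeasurableSet (A i j) := (P.meas i).inter (Q.meas j)
      rw [hBfalse]
      split
      · exact hAm.diff (measurableSet_singleton _)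
      · exact hAm
    · rw [hBtrue]
      split
      · exact measurableSet_singleton _
      · exact MeasurableSet.empty
  have hdisjA : ∀ (i i' : Fin P.k) (j j' : Fin Q.k), (i, j) ≠ (i', j') →
      Disjoint (A i j) (A i' j') := by
    intro i i' j j' hne
    by_cases hi : i = i'
    · have hj : j ≠ j' := fun e => hne (by rw [hi, e])
      exact Disjoint.mono inter_subset_right inter_subset_right (Q.disj _ _ hj)
    · exact Disjoint.mono inter_subset_left inter_subset_left (P.disj _ _ hi)
  have hdisjB : ∀ p q, p ≠ q → Disjoint (B p) (B q) := by
    intro p q hne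
    by_cases hij : (p.1, p.2.1) = (q.1, q.2.1)
    · have h1 : p.1 = q.1 := (Prod.ext_iff.1 hij).1
      have h2 : p.2.1 = q.2.1 := (Prod.ext_iff.1 hij).2
      have h3 : p.2.2 ≠ q.2.2 := by
        intro e
        exact hne (Prod.ext h1 (Prod.ext h2 e))
      -- same (i,j), different bool
      obtain ⟨i, j, bp⟩ := p
      obtain ⟨i', j', bq⟩ := q
      simp only at h1 h2 h3
      subst h1; subst h2
      cases bp <;> cases bq
      · exact absurd rfl h3
      · rw [hBfalse, hBtrue]
        split
        · exact Set.disjoint_left.2 (fun x hx hx2 => hx.2 hx2)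
        · exact disjoint_empty _
      · rw [hBfalse, hBtrue]
        split
        · exact Set.disjoint_right.2 (fun x hx hx2 => hx.2 hx2)
        · exact empty_disjoint _
      · exact absurd rfl h3
    · exact Disjoint.mono (hBA p) (hBA q) (hdisjA _ _ _ _ hij)
  have hcovB' : ∀ (i : Fin P.k) (j : Fin Q.k), ∀ x ∈ A i j,
      (x ∈ B (i, j, false)) ∨ (x ∈ B (i, j, true)) := by
    intro i j x hx
    by_cases hs : spl i j
    · by_cases hxq : x = Q.tag j
      · right; rw [hBtrue, if_pos hs]; exact mem_singleton_iff.2 hxq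
      · left; rw [hBfalse, if_pos hs]; exact ⟨hx, fun h => hxq (mem_singleton_iff.1 h)⟩
    · left; rw [hBfalse, if_neg hs]; exact hx
  have hcovB : (⋃ p, B p) = Set.univ := by
    apply Set.eq_univ_of_forall
    intro x
    have hxP : x ∈ ⋃ i, P.E i := P.cover.symm ▸ mem_univ x
    have hxQ : x ∈ ⋃ j, Q.E j := Q.cover.symm ▸ mem_univ x
    obtain ⟨i, hi⟩ := mem_iUnion.1 hxP
    obtain ⟨j, hj⟩ := mem_iUnion.1 hxQ
    rcases hcovB' i j x ⟨hi, hj⟩ with h | h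
    · exact mem_iUnion.2 ⟨(i, j, false), h⟩
    · exact mem_iUnion.2 ⟨(i, j, true), h⟩
  have hfineτ : ∀ p, ∀ w ∈ B p, dist w (τ p) < γ (τ p) :=
    fun p w hw => hPF p.1 w (hBA p hw).1
  have hfineσ : ∀ p, ∀ w ∈ B p, dist w (σ p) < γ (σ p) :=
    fun p w hw => hQF p.2.1 w (hBA p hw).2
  have htagP : ∀ p q, τ p ∈ B q → τ q = τ p := by
    intro p q h
    have h1 : τ p ∈ P.E q.1 := (hBA q h).1
    have h2 : τ p ∈ P.E p.1 := hPH p.1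
    have : q.1 = p.1 := by
      by_contra hne
      exact Set.disjoint_left.1 (P.disj _ _ hne) h1 h2
    simp only [hτ, this]
  have htagQ : ∀ p q, σ p ∈ B q → σ q = σ p := by
    intro p q h
    have h1 : σ p ∈ Q.E q.2.1 := (hBA q h).2
    have h2 : σ p ∈ Q.E p.2.1 := hQH p.2.1
    have : q.2.1 = p.2.1 := by
      by_contra hne
      exact Set.disjoint_left.1 (Q.disj _ _ hne) h1 h2
    simp only [hσ, this]
  have hP3 : ∀ p, τ p ∈ B p → σ p ∈ B p → τ p = σ p := by
    rintro ⟨i, j, (_|_)⟩ hτm hσm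
    · rw [hBfalse] at hτm hσm
      by_cases hns : spl i j
      · rw [if_pos hns] at hσm
        exact absurd hσm.2 (fun h => h rfl)
      · rw [if_neg hns] at hτm hσm
        by_contra hne
        exact hns ⟨hτm, hσm, hne⟩
    · rw [hBtrue] at hτm hσm
      split at hτm
      · exact mem_singleton_iff.1 hτm
      · exact absurd hτm (notMem_empty _)
  have homeτ : ∀ p, ∃ q, τ q = τ p ∧ τ q ∈ B q := by
    intro p
    have : τ p ∈ ⋃ q, B q := hcovB.symm ▸ mem_univ _
    obtain ⟨q, hq⟩ := mem_iUnion.1 this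
    exact ⟨q, htagP p q hq, by rw [htagP p q hq]; exact hq⟩
  have homeσ : ∀ p, ∃ q, σ q = σ p ∧ σ q ∈ B q := by
    intro p
    have : σ p ∈ ⋃ q, B q := hcovB.symm ▸ mem_univ _
    obtain ⟨q, hq⟩ := mem_iUnion.1 this
    exact ⟨q, htagQ p q hq, by rw [htagQ p q hq]; exact hq⟩
  set x : Fin P.k × Fin Q.k × Bool → X :=
    fun p => (μ (B p)).toReal • f (τ p) - (μ (B p)).toReal • f (σ p) with hx
  -- bound for merged configurations
  have cfg_bound : ∀ χ : Fin P.k × Fin Q.k × Bool → T,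
      (∀ p, χ p = τ p ∨ χ p = σ p) → (∀ p, ∃ q, χ q = χ p ∧ χ q ∈ B q) →
      |(∑ p, (μ (B p)).toReal • f (χ p)) - J| ≤ b2 := by
    intro χ hopt hval
    have hfine : ∀ p, ∀ w ∈ B p, dist w (χ p) < γ (χ p) := by
      intro p w hw
      rcases hopt p with h | h <;> rw [h]
      · exact hfineτ p w hw
      · exact hfineσ p w hw
    obtain ⟨R, hRH, hRF, hRsum⟩ := merge_part B χ hmeasB hdisjB hcovB γ hfine hval f (μ := μ)
    rw [← hRsum]
    exact hb R hRH hRF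
  -- generic group bound
  have diffsum : ∀ (c : (Fin P.k × Fin Q.k × Bool → Bool) → Fin P.k × Fin Q.k × Bool → T)
      (W : Fin P.k × Fin Q.k × Bool → Prop) (instW : DecidablePred W),
      (∀ ε p, W p → c ε p = if ε p then τ p else σ p) →
      (∀ ε ε' p, ¬W p → c ε p = c ε' p) →
      (∀ ε, (∀ p, c ε p = τ p ∨ c ε p = σ p) ∧ (∀ p, ∃ q, c ε q = c ε p ∧ c ε q ∈ B q)) →
      (∑ p ∈ @Finset.filter _ W instW Finset.univ, |x p|) ≤ b2 + b2 := by
    intro c W instW hcW hcnW hcok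
    apply sum_abs_le_of_signs
    intro ε
    set ε' : Fin P.k × Fin Q.k × Bool → Bool := fun p => !(ε p) with hε'
    have key : (∑ p ∈ Finset.univ.filter W, (if ε p then x p else -x p)) =
        (∑ p, (μ (B p)).toReal • f (c ε p)) - (∑ p, (μ (B p)).toReal • f (c ε' p)) := by
      rw [← Finset.sum_sub_distrib]
      rw [← Finset.sum_filter_add_sum_filter_not Finset.univ W
        (fun p => (μ (B p)).toReal • f (c ε p) - (μ (B p)).toReal • f (c ε' p))]
      have h2 : (∑ p ∈ Finset.univ.filter (fun p => ¬ W p),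
          ((μ (B p)).toReal • f (c ε p) - (μ (B p)).toReal • f (c ε' p))) = 0 := by
        apply Finset.sum_eq_zero
        intro p hp
        rw [hcnW ε ε' p (Finset.mem_filter.1 hp).2, sub_self]
      rw [h2, add_zero]
      apply Finset.sum_congr rfl
      intro p hp
      have hW := (Finset.mem_filter.1 hp).2
      rw [hcW ε p hW, hcW ε' p hW]
      rcases Bool.eq_false_or_eq_true (ε p) with h | h <;> simp [h, hε', hx]
    rw [key]
    have h1 := cfg_bound (c ε) (hcok ε).1 (hcok ε).2
    have h2 := cfg_bound (c ε') (hcok ε').1 (hcok ε').2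
    calc (∑ p, (μ (B p)).toReal • f (c ε p)) - (∑ p, (μ (B p)).toReal • f (c ε' p))
        = ((∑ p, (μ (B p)).toReal • f (c ε p)) - J) -
          ((∑ p, (μ (B p)).toReal • f (c ε' p)) - J) := by abel
      _ ≤ |(∑ p, (μ (B p)).toReal • f (c ε p)) - J| +
          |(∑ p, (μ (B p)).toReal • f (c ε' p)) - J| := sub_le_abs_add_abs _ _
      _ ≤ b2 + b2 := add_le_add h1 h2
  -- the three groups
  have group1 : (∑ p ∈ Finset.univ.filter (fun p => τ p ∈ B p), |x p|) ≤ b2 + b2 := by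
    apply diffsum (fun ε p => if τ p ∈ B p ∧ ε p = true then τ p else σ p) _ _
    · intro ε p hW
      by_cases h : ε p = true <;> simp [h, hW]
    · intro ε ε' p hW
      simp [hW]
    · intro ε
      constructor
      · intro p
        by_cases h : τ p ∈ B p ∧ ε p = true <;> simp [h]
      · intro p
        by_cases h : τ p ∈ B p ∧ ε p = true
        · rw [if_pos h]
          exact ⟨p, if_pos h, by rw [if_pos h]; exact h.1⟩
        · rw [if_neg h]
          obtain ⟨q, hq1, hq2⟩ := homeσ p
          refine ⟨q, ?_, ?_⟩
          · by_cases h2 : τ q ∈ B q ∧ ε q = true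
            · rw [if_pos h2, hP3 q h2.1 hq2]
              exact hq1
            · rw [if_neg h2]; exact hq1
          · by_cases h2 : τ q ∈ B q ∧ ε q = true
            · rw [if_pos h2]; exact h2.1
            · rw [if_neg h2]; exact hq2
  have group2 : (∑ p ∈ Finset.univ.filter (fun p => ¬(τ p ∈ B p) ∧ σ p ∈ B p), |x p|) ≤ b2 + b2 := by
    apply diffsum (fun ε p => if (¬(τ p ∈ B p) ∧ σ p ∈ B p) ∧ ε p = false then σ p else τ p) _ _
    · intro ε p hW
      rcases Bool.eq_false_or_eq_true (ε p) with h | h <;> simp [h, hW]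
    · intro ε ε' p hW
      simp [hW]
    · intro ε
      constructor
      · intro p
        by_cases h : (¬(τ p ∈ B p) ∧ σ p ∈ B p) ∧ ε p = false <;> simp [h]
      · intro p
        by_cases h : (¬(τ p ∈ B p) ∧ σ p ∈ B p) ∧ ε p = false
        · rw [if_pos h]
          exact ⟨p, if_pos h, by rw [if_pos h]; exact h.1.2⟩
        · rw [if_neg h]
          obtain ⟨q, hq1, hq2⟩ := homeτ p
          have h2 : ¬(((¬(τ q ∈ B q) ∧ σ q ∈ B q) ∧ ε q = false)) :=
            fun h3 => h3.1.1 hq2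
          exact ⟨q, by rw [if_neg h2]; exact hq1, by rw [if_neg h2]; exact hq2⟩
  have group3 : (∑ p ∈ Finset.univ.filter (fun p => ¬(τ p ∈ B p) ∧ ¬(σ p ∈ B p)), |x p|) ≤ b2 + b2 := by
    apply diffsum (fun ε p => if τ p ∈ B p then τ p else if σ p ∈ B p then σ p
      else if ε p then τ p else σ p) _ _
    · intro ε p hW
      rw [if_neg hW.1, if_neg hW.2]
    · intro ε ε' p hW
      rw [not_and_or, not_not, not_not] at hW
      rcases hW with h | h
      · rw [if_pos h, if_pos h]
      · by_cases h1 : τ p ∈ B p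
        · rw [if_pos h1, if_pos h1]
        · rw [if_neg h1, if_neg h1, if_pos h, if_pos h]
    · intro ε
      constructor
      · intro p
        by_cases h1 : τ p ∈ B p
        · simp [h1]
        · by_cases h2 : σ p ∈ B p
          · simp [h1, h2]
          · by_cases h3 : ε p = true <;> simp [h1, h2, h3]
      · intro p
        by_cases h1 : τ p ∈ B p
        · rw [if_pos h1]
          exact ⟨p, if_pos h1, by rw [if_pos h1]; exact h1⟩
        · rw [if_neg h1]
          by_cases h2 : σ p ∈ B p
          · rw [if_pos h2]
            exact ⟨p, by rw [if_neg h1, if_pos h2], by rw [if_neg h1, if_pos h2]; exact h2⟩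
          · rw [if_neg h2]
            by_cases h3 : ε p = true
            · rw [if_pos h3]
              obtain ⟨q, hq1, hq2⟩ := homeτ p
              exact ⟨q, by rw [if_pos hq2]; exact hq1, by rw [if_pos hq2]; exact hq2⟩
            · rw [if_neg h3]
              obtain ⟨q, hq1, hq2⟩ := homeσ p
              by_cases h4 : τ q ∈ B q
              · refine ⟨q, ?_, ?_⟩
                · rw [if_pos h4, hP3 q h4 hq2]; exact hq1
                · rw [if_pos h4]; exact h4
              · exact ⟨q, by rw [if_neg h4, if_pos hq2]; exact hq1,
                  by rw [if_neg h4, if_pos hq2]; exact hq2⟩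
  -- assemble: total sum of |x p|
  have total : (∑ p, |x p|) ≤ b2+b2 + (b2+b2) + (b2+b2) := by
    have split1 := Finset.sum_filter_add_sum_filter_not Finset.univ
      (fun p => τ p ∈ B p) (fun p => |x p|)
    have split2 := Finset.sum_filter_add_sum_filter_not
      (Finset.univ.filter (fun p => ¬(τ p ∈ B p))) (fun p => σ p ∈ B p) (fun p => |x p|)
    rw [Finset.filter_filter, Finset.filter_filter] at split2
    calc (∑ p, |x p|)
        = (∑ p ∈ Finset.univ.filter (fun p => τ p ∈ B p), |x p|)
          + ((∑ p ∈ Finset.univ.filter (fun p => ¬(τ p ∈ B p) ∧ σ p ∈ B p), |x p|)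
          + (∑ p ∈ Finset.univ.filter (fun p => ¬(τ p ∈ B p) ∧ ¬(σ p ∈ B p)), |x p|)) := by
            rw [split2, split1]
      _ ≤ (b2+b2) + ((b2+b2) + (b2+b2)) := by
            exact add_le_add group1 (add_le_add group2 group3)
      _ = b2+b2 + (b2+b2) + (b2+b2) := by abel
  -- decomposition of the two Riemann sums of |f|
  have hFP : ∀ i, P.E i = ⋃ p ∈ Finset.univ.filter
      (fun p : Fin P.k × Fin Q.k × Bool => p.1 = i), B p := by
    intro i
    apply Subset.antisymm
    · intro w hw
      have hxQ : w ∈ ⋃ j, Q.E j := Q.cover.symm ▸ mem_univ w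
      obtain ⟨j, hj⟩ := mem_iUnion.1 hxQ
      rcases hcovB' i j w ⟨hw, hj⟩ with h | h
      · exact mem_biUnion (Finset.mem_filter.2 ⟨Finset.mem_univ _, rfl⟩) h
      · exact mem_biUnion (Finset.mem_filter.2 ⟨Finset.mem_univ _, rfl⟩) h
    · intro w hw
      obtain ⟨p, hp, hwp⟩ := mem_iUnion₂.1 hw
      have := (hBA p hwp).1
      rw [(Finset.mem_filter.1 hp).2] at this
      exact this
  have hFQ : ∀ j, Q.E j = ⋃ p ∈ Finset.univ.filter
      (fun p : Fin P.k × Fin Q.k × Bool => p.2.1 = j), B p := by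
    intro j
    apply Subset.antisymm
    · intro w hw
      have hxP : w ∈ ⋃ i, P.E i := P.cover.symm ▸ mem_univ w
      obtain ⟨i, hi⟩ := mem_iUnion.1 hxP
      rcases hcovB' i j w ⟨hi, hw⟩ with h | h
      · exact mem_biUnion (Finset.mem_filter.2 ⟨Finset.mem_univ _, rfl⟩) h
      · exact mem_biUnion (Finset.mem_filter.2 ⟨Finset.mem_univ _, rfl⟩) h
    · intro w hw
      obtain ⟨p, hp, hwp⟩ := mem_iUnion₂.1 hw
      have := (hBA p hwp).2
      rw [(Finset.mem_filter.1 hp).2] at this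
      exact this
  have hPdec : P.sum (fun t => |f t|) μ = ∑ p, (μ (B p)).toReal • |f (τ p)| := by
    show (∑ i, (μ (P.E i)).toReal • |f (P.tag i)|) = _
    exact fiber_sum B hmeasB hdisjB (fun p => p.1) P.E hFP (fun i => |f (P.tag i)|)
  have hQdec : Q.sum (fun t => |f t|) μ = ∑ p, (μ (B p)).toReal • |f (σ p)| := by
    show (∑ i, (μ (Q.E i)).toReal • |f (Q.tag i)|) = _
    exact fiber_sum B hmeasB hdisjB (fun p => p.2.1) Q.E hFQ (fun j => |f (Q.tag j)|)
  rw [hPdec, hQdec, ← Finset.sum_sub_distrib]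
  refine le_trans (Finset.sum_le_sum (fun p _ => ?_)) total
  have habs : |f (τ p)| - |f (σ p)| ≤ |f (τ p) - f (σ p)| := by
    calc |f (τ p)| - |f (σ p)| ≤ |(|f (τ p)| - |f (σ p)|)| := le_abs_self _
    _ ≤ |f (τ p) - f (σ p)| := abs_abs_sub_abs_le _ _
  calc (μ (B p)).toReal • |f (τ p)| - (μ (B p)).toReal • |f (σ p)|
      = (μ (B p)).toReal • (|f (τ p)| - |f (σ p)|) := (smul_sub _ _ _).symm
    _ ≤ (μ (B p)).toReal • |f (τ p) - f (σ p)| := smul_mono' ENNReal.toReal_nonneg habs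
    _ = |(μ (B p)).toReal • (f (τ p) - f (σ p))| := smul_abs_eq ENNReal.toReal_nonneg _
    _ = |x p| := by rw [smul_sub]
end Master


theorem oH_integrable_abs {T : Type*} [MetricSpace T] [CompactSpace T] [MeasurableSpace T] [BorelSpace T]
    (μ : Measure T) [IsFiniteMeasure μ] [μ.Regular]
    {X : Type*} [NormedAddCommGroup X] [Lattice X] [IsOrderedAddMonoid X] [HasSolidNorm X] [NormedSpace ℝ X] [CompleteSpace X]
    (hDC : ∀ s : Set X, s.Nonempty → BddAbove s → ∃ x, IsLUB s x) (f : T → X) (J : X)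
    (hf : HasOHIntegralOn f μ Set.univ J) :
    ∃ J' : X, HasOHIntegralOn (fun t => |f t|) μ Set.univ J' := by
  classical
  obtain ⟨b, hbos, γ, hγ, hbound⟩ := hf
  set g : T → X := fun t => |f t| with hg
  -- the decreasing sequence of gages
  set γ' : ℕ → T → ℝ := fun n => Nat.rec (γ 0) (fun m gm t => min (gm t) (γ (m+1) t)) n with hγ'def
  have hγ'succ : ∀ n t, γ' (n+1) t = min (γ' n t) (γ (n+1) t) := fun n t => rfl
  have hγ'pos : ∀ n, IsGage (γ' n) := by
    intro n
    induction n with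
    | zero => exact hγ 0
    | succ m ih => exact fun t => lt_min (ih t) (hγ (m+1) t)
  have hγ'le : ∀ n t, γ' n t ≤ γ n t := by
    intro n
    induction n with
    | zero => exact fun t => le_refl _
    | succ m _ => exact fun t => min_le_right _ _
  have hγ'anti : ∀ m n, m ≤ n → ∀ t, γ' n t ≤ γ' m t := by
    intro m n h
    induction n, h using Nat.le_induction with
    | base => exact fun t => le_refl _
    | succ k hk ih => exact fun t => le_trans (min_le_left _ _) (ih t)
  set SIX : ℕ → X := fun n => (6:ℕ) • b n with hSIX
  have hSIXeq : ∀ n, SIX n = b n + b n + (b n + b n) + (b n + b n) := by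
    intro n
    show (6:ℕ) • b n = _
    rw [show (6:ℕ) = 1+1+1+1+1+1 from rfl]
    simp only [add_nsmul, one_nsmul]
    abel
  have hSIXanti : Antitone SIX := fun m n h => nsmul_le_nsmul_right (hbos.1 h) 6
  have hSIXglb : IsGLB (Set.range SIX) 0 := osq_nsmul hbos 6
  -- the master two-partition estimate at level n
  have key : ∀ n (P Q : TaggedPart T (Set.univ : Set T)), P.IsHenstock → P.IsFine (γ' n) →
      Q.IsHenstock → Q.IsFine (γ' n) → P.sum g μ - Q.sum g μ ≤ SIX n := by
    intro n P Q hPH hPF hQH hQF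
    have h := master_est f J (γ n) (b n) (hbound n) P Q hPH
      (fun i w hw => lt_of_lt_of_le (hPF i w hw) (hγ'le n _)) hQH
      (fun i w hw => lt_of_lt_of_le (hQF i w hw) (hγ'le n _))
    rw [hSIXeq n]
    exact h
  set S : ℕ → Set X := fun n =>
    {v | ∃ P : TaggedPart T (Set.univ : Set T), P.IsHenstock ∧ P.IsFine (γ' n) ∧ P.sum g μ = v}
    with hS
  have hSne : ∀ n, (S n).Nonempty := by
    intro n
    obtain ⟨P, hH, hF⟩ := cousin (γ' n) (hγ'pos n)
    exact ⟨P.sum g μ, P, hH, hF, rfl⟩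
  have hpair : ∀ n x y, x ∈ S n → y ∈ S n → x ≤ y + SIX n := by
    rintro n x y ⟨P, hPH, hPF, rfl⟩ ⟨Q, hQH, hQF, rfl⟩
    exact sub_le_iff_le_add.1 (le_trans (key n P Q hPH hPF hQH hQF) (le_refl _)) |>.trans_eq
      (add_comm _ _) |>.trans_eq rfl
  have hSsub : ∀ m n, m ≤ n → S n ⊆ S m := by
    rintro m n h v ⟨P, hPH, hPF, rfl⟩
    exact ⟨P, hPH, fun i w hw => lt_of_lt_of_le (hPF i w hw) (hγ'anti m n h _), rfl⟩
  have hbdd : ∀ n, BddAbove (S n) := by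
    intro n
    obtain ⟨x0, hx0⟩ := hSne n
    exact ⟨x0 + SIX n, fun y hy => hpair n y x0 hy hx0⟩
  have hu : ∀ n, IsLUB (S n) ((hDC (S n) (hSne n) (hbdd n)).choose) :=
    fun n => (hDC (S n) (hSne n) (hbdd n)).choose_spec
  set u : ℕ → X := fun n => (hDC (S n) (hSne n) (hbdd n)).choose with hudef
  have hux : ∀ n x, x ∈ S n → x ≤ u n := fun n x hx => (hu n).1 hx
  have huxb : ∀ n x, x ∈ S n → u n ≤ x + SIX n :=
    fun n x hx => (hu n).2 (fun y hy => hpair n y x hy hx)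
  have hu_lb : ∀ n m, u n - SIX n ≤ u m := by
    intro n m
    obtain ⟨z, hz⟩ := hSne (max n m)
    have hz1 : z ∈ S n := hSsub n (max n m) (le_max_left _ _) hz
    have hz2 : z ∈ S m := hSsub m (max n m) (le_max_right _ _) hz
    exact le_trans (sub_le_iff_le_add.2 (huxb n z hz1)) (hux m z hz2)
  set Lb : Set X := {y | ∀ n, y ≤ u n} with hLb
  have hLbne : Lb.Nonempty := ⟨u 0 - SIX 0, fun n => hu_lb 0 n⟩
  have hLbbdd : BddAbove Lb := ⟨u 0, fun y hy => hy 0⟩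
  obtain ⟨J', hJ⟩ := hDC Lb hLbne hLbbdd
  have hJle : ∀ n, J' ≤ u n := fun n => hJ.2 (fun y hy => hy n)
  have hJge : ∀ n, u n - SIX n ≤ J' := fun n => hJ.1 (fun m => hu_lb n m)
  refine ⟨J', SIX, ⟨hSIXanti, hSIXglb⟩, γ', hγ'pos, ?_⟩
  intro n P hPH hPF
  have hx : P.sum g μ ∈ S n := ⟨P, hPH, hPF, rfl⟩
  have h1 : P.sum g μ - J' ≤ SIX n := by
    have : P.sum g μ ≤ SIX n + J' := (hux n _ hx).trans
      (by rw [← sub_le_iff_le_add']; exact hJge n)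
    exact sub_le_iff_le_add.2 this
  have h2 : -(P.sum g μ - J') ≤ SIX n := by
    rw [neg_sub]
    have : J' ≤ P.sum g μ + SIX n := (hJle n).trans (huxb n _ hx)
    exact sub_le_iff_le_add.2 (this.trans_eq (add_comm _ _))
  exact sup_le h1 h2
end

section
/- Let X be an L-space (a Banach lattice whose norm satisfies ‖x+y‖ = ‖x‖+‖y‖ for all x, y ≥ 0) and f: T → X order-Henstock integrable. Then the scalar function t ↦ ‖f(t)‖ is Henstock integrable. -/
set_option linter.unusedSectionVars false


open MeasureTheory Set Filter

-- main theorem moved to end of file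


open Topology

section SignLemma

variable {X : Type*} [Lattice X] [AddCommGroup X] [CovariantClass X X (· + ·) (· ≤ ·)]

lemma abs_add_abs_le_sup' (a b : X) : |a| + |b| ≤ |a + b| ⊔ |a - b| := by
  have habs : ∀ v : X, |v| = v ⊔ -v := fun v => rfl
  have h1 : a + |b| ≤ |a + b| ⊔ |a - b| := by
    rw [habs b, add_sup]
    refine sup_le (le_sup_of_le_left (le_abs_self _)) (le_sup_of_le_right ?_)
    rw [← sub_eq_add_neg]; exact le_abs_self _
  have h2 : -a + |b| ≤ |a + b| ⊔ |a - b| := by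
    rw [habs b, add_sup]
    refine sup_le (le_sup_of_le_right ?_) (le_sup_of_le_left ?_)
    · have : -a + b = -(a - b) := by abel
      rw [this]; exact neg_le_abs _
    · have : -a + -b = -(a + b) := by abel
      rw [this]; exact neg_le_abs _
  calc |a| + |b| = (a ⊔ -a) + |b| := by rw [habs]
    _ = (a + |b|) ⊔ (-a + |b|) := sup_add a (-a) |b|
    _ ≤ _ := sup_le h1 h2

lemma sign_sum_le {ι : Type*} [DecidableEq ι] (u : Finset ι) (x : ι → X) (c : X) :
    ∀ t : X, (∀ S ⊆ u, |t + ((∑ i ∈ S, x i) - ∑ i ∈ u \ S, x i)| ≤ c) →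
      |t| + ∑ i ∈ u, |x i| ≤ c := by
  induction u using Finset.induction_on with
  | empty =>
    intro t h
    simpa using h ∅ (by simp)
  | @insert a u ha ih =>
    intro t h
    have key : |t| + |x a| ≤ |t + x a| ⊔ |t - x a| := abs_add_abs_le_sup' t (x a)
    have h1 : ∀ S ⊆ u, |(t + x a) + ((∑ i ∈ S, x i) - ∑ i ∈ u \ S, x i)| ≤ c := by
      intro S hS
      have hSs : insert a S ⊆ insert a u := Finset.insert_subset_insert a hS
      have haS : a ∉ S := fun hmem => ha (hS hmem)
      have hsd : (insert a u) \ (insert a S) = u \ S := by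
        ext z
        simp only [Finset.mem_sdiff, Finset.mem_insert, not_or]
        constructor
        · rintro ⟨hz | hz, h1, h2⟩
          · exact absurd hz h1
          · exact ⟨hz, h2⟩
        · rintro ⟨hz, h2⟩
          exact ⟨Or.inr hz, fun e => ha (e ▸ hz), h2⟩
      have := h (insert a S) hSs
      rw [hsd, Finset.sum_insert haS] at this
      have heq : t + (x a + ∑ i ∈ S, x i - ∑ i ∈ u \ S, x i)
          = (t + x a) + ((∑ i ∈ S, x i) - ∑ i ∈ u \ S, x i) := by abel
      rwa [heq] at this
    have h2 : ∀ S ⊆ u, |(t - x a) + ((∑ i ∈ S, x i) - ∑ i ∈ u \ S, x i)| ≤ c := by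
      intro S hS
      have haS : a ∉ S := fun hmem => ha (hS hmem)
      have hauS : a ∉ u \ S := fun hmem => ha (Finset.mem_sdiff.1 hmem).1
      have hsd : (insert a u) \ S = insert a (u \ S) := by
        ext z
        simp only [Finset.mem_sdiff, Finset.mem_insert]
        constructor
        · rintro ⟨hz | hz, h2⟩
          · exact Or.inl hz
          · exact Or.inr ⟨hz, h2⟩
        · rintro (rfl | ⟨hz, h2⟩)
          · exact ⟨Or.inl rfl, haS⟩
          · exact ⟨Or.inr hz, h2⟩
      have := h S (hS.trans (Finset.subset_insert a u))
      rw [hsd, Finset.sum_insert hauS] at this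
      have heq : t + (∑ i ∈ S, x i - (x a + ∑ i ∈ u \ S, x i))
          = (t - x a) + ((∑ i ∈ S, x i) - ∑ i ∈ u \ S, x i) := by abel
      rwa [heq] at this
    calc |t| + ∑ i ∈ insert a u, |x i| = (|t| + |x a|) + ∑ i ∈ u, |x i| := by
          rw [Finset.sum_insert ha, add_assoc]
      _ ≤ (|t + x a| ⊔ |t - x a|) + ∑ i ∈ u, |x i| := add_le_add_left key _
      _ = (|t + x a| + ∑ i ∈ u, |x i|) ⊔ (|t - x a| + ∑ i ∈ u, |x i|) := sup_add _ _ _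
      _ ≤ c := sup_le (ih (t + x a) h1) (ih (t - x a) h2)

end SignLemma

section LNorm

variable {X : Type*} [NormedAddCommGroup X] [Lattice X] [HasSolidNorm X] [IsOrderedAddMonoid X]

lemma lnorm_sum (hL : ∀ x y : X, 0 ≤ x → 0 ≤ y → ‖x + y‖ = ‖x‖ + ‖y‖)
    {ι : Type*} (u : Finset ι) (y : ι → X) (hy : ∀ i ∈ u, 0 ≤ y i) :
    ‖∑ i ∈ u, y i‖ = ∑ i ∈ u, ‖y i‖ := by
  classical
  induction u using Finset.induction_on with
  | empty => simp
  | @insert a u ha ih =>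
    rw [Finset.sum_insert ha, Finset.sum_insert ha,
      hL _ _ (hy a (Finset.mem_insert_self a u)) (Finset.sum_nonneg fun i hi => hy i (Finset.mem_insert_of_mem hi)),
      ih fun i hi => hy i (Finset.mem_insert_of_mem hi)]

lemma norm_oseq_aux [CompleteSpace X]
    (hL : ∀ x y : X, 0 ≤ x → 0 ≤ y → ‖x + y‖ = ‖x‖ + ‖y‖) {b : ℕ → X} (hb : IsOSeq b) :
    Antitone (fun n => ‖b n‖) ∧ Tendsto (fun n => ‖b n‖) atTop (𝓝 0) := by
  have hpos : ∀ n, 0 ≤ b n := fun n => hb.2.1 ⟨n, rfl⟩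
  have hdiff : ∀ {m n : ℕ}, m ≤ n → ‖b m‖ = ‖b m - b n‖ + ‖b n‖ := by
    intro m n h
    have := hL (b m - b n) (b n) (sub_nonneg.2 (hb.1 h)) (hpos n)
    rwa [sub_add_cancel] at this
  have hanti : Antitone (fun n => ‖b n‖) := by
    intro m n h
    show ‖b n‖ ≤ ‖b m‖
    rw [hdiff h]
    exact le_add_of_nonneg_left (norm_nonneg _)
  refine ⟨hanti, ?_⟩
  have hd : ∀ m n, dist (b m) (b n) = dist ‖b m‖ ‖b n‖ := by
    have key : ∀ {m n : ℕ}, m ≤ n → dist (b m) (b n) = dist ‖b m‖ ‖b n‖ := by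
      intro m n h
      rw [dist_eq_norm, Real.dist_eq, abs_of_nonneg (sub_nonneg.2 (hanti h))]
      have := hdiff h
      linarith [this]
    intro m n
    rcases le_total m n with h | h
    · exact key h
    · rw [dist_comm, dist_comm ‖b m‖]; exact key h
  have hrc : CauchySeq (fun n => ‖b n‖) := by
    have : BddBelow (range fun n => ‖b n‖) := ⟨0, by rintro x ⟨n, rfl⟩; exact norm_nonneg _⟩
    exact (tendsto_atTop_ciInf hanti this).cauchySeq
  have hcb : CauchySeq b := by
    rw [Metric.cauchySeq_iff]
    intro ε hε
    obtain ⟨N, hN⟩ := Metric.cauchySeq_iff.1 hrc ε hε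
    exact ⟨N, fun m hm n hn => by rw [hd]; exact hN m hm n hn⟩
  obtain ⟨L, hLlim⟩ := cauchySeq_tendsto_of_complete hcb
  have hLlb : ∀ n, L ≤ b n := by
    intro n
    refine le_of_tendsto hLlim ?_
    filter_upwards [eventually_ge_atTop n] with m hm
    exact hb.1 hm
  have hL0 : L ≤ 0 := hb.2.2 (by rintro x ⟨n, rfl⟩; exact hLlb n)
  have h0L : 0 ≤ L := ge_of_tendsto hLlim (Eventually.of_forall hpos)
  have : L = 0 := le_antisymm hL0 h0L
  simpa [this] using hLlim.norm
end LNorm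

section Construction

variable {T : Type*} [MetricSpace T] [MeasurableSpace T] [BorelSpace T] [DecidableEq T]

/-- All tag points of two partitions. -/
noncomputable def tagSet (P P' : TaggedPart T (univ : Set T)) : Finset T :=
  Finset.univ.image P.tag ∪ Finset.univ.image P'.tag

lemma tag_mem_tagSet_left (P P' : TaggedPart T (univ : Set T)) (i : Fin P.k) :
    P.tag i ∈ tagSet P P' :=
  Finset.mem_union_left _ (Finset.mem_image_of_mem _ (Finset.mem_univ i))

lemma tag_mem_tagSet_right (P P' : TaggedPart T (univ : Set T)) (j : Fin P'.k) :
    P'.tag j ∈ tagSet P P' :=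
  Finset.mem_union_right _ (Finset.mem_image_of_mem _ (Finset.mem_univ j))

/-- The refinement cells with all tag points removed. -/
noncomputable def cellD (P P' : TaggedPart T (univ : Set T)) (p : Fin P.k × Fin P'.k) : Set T :=
  (P.E p.1 ∩ P'.E p.2) \ ↑(tagSet P P')

lemma cellD_meas (P P' : TaggedPart T (univ : Set T)) (p : Fin P.k × Fin P'.k) :
    MeasurableSet (cellD P P' p) :=
  ((P.meas _).inter (P'.meas _)).diff (tagSet P P').measurableSet

lemma cellD_sub_left (P P' : TaggedPart T (univ : Set T)) (p : Fin P.k × Fin P'.k) :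
    cellD P P' p ⊆ P.E p.1 := fun _ hw => hw.1.1

lemma cellD_sub_right (P P' : TaggedPart T (univ : Set T)) (p : Fin P.k × Fin P'.k) :
    cellD P P' p ⊆ P'.E p.2 := fun _ hw => hw.1.2

lemma cellD_disj (P P' : TaggedPart T (univ : Set T)) {p q : Fin P.k × Fin P'.k} (hpq : p ≠ q) :
    Disjoint (cellD P P' p) (cellD P P' q) := by
  rw [Set.disjoint_left]
  intro w hwp hwq
  apply hpq
  have h1 : p.1 = q.1 := by
    by_contra hne
    exact Set.disjoint_left.1 (P.disj _ _ hne) (cellD_sub_left _ _ _ hwp) (cellD_sub_left _ _ _ hwq)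
  have h2 : p.2 = q.2 := by
    by_contra hne
    exact Set.disjoint_left.1 (P'.disj _ _ hne) (cellD_sub_right _ _ _ hwp) (cellD_sub_right _ _ _ hwq)
  exact Prod.ext h1 h2

lemma cellD_disjoint_tagSet (P P' : TaggedPart T (univ : Set T)) (p : Fin P.k × Fin P'.k) :
    ∀ w ∈ cellD P P' p, w ∉ tagSet P P' := fun _ hw => hw.2

/-- The index of the piece of `P` containing `z`. -/
noncomputable def pidx (P : TaggedPart T (univ : Set T)) (z : T) : Fin P.k :=
  (show ∃ i, z ∈ P.E i by
    have : z ∈ ⋃ i, P.E i := by rw [P.cover]; trivial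
    simpa using this).choose

lemma pidx_mem (P : TaggedPart T (univ : Set T)) (z : T) : z ∈ P.E (pidx P z) :=
  (show ∃ i, z ∈ P.E i by
    have : z ∈ ⋃ i, P.E i := by rw [P.cover]; trivial
    simpa using this).choose_spec

lemma pidx_eq (P : TaggedPart T (univ : Set T)) {z : T} {i : Fin P.k} (h : z ∈ P.E i) :
    pidx P z = i := by
  by_contra hne
  exact Set.disjoint_left.1 (P.disj _ _ hne) (pidx_mem P z) h

lemma pidx_tag (P : TaggedPart T (univ : Set T)) (hP : P.IsHenstock) (i : Fin P.k) :
    pidx P (P.tag i) = i := pidx_eq P (hP i)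

/-- One piece of the combined partition. -/
noncomputable def cpiece (P P' : TaggedPart T (univ : Set T)) (g : Fin P.k × Fin P'.k → T)
    (h : T → T) (z : T) : Set T :=
  ↑((tagSet P P').filter fun w => h w = z) ∪
    ⋃ (p : Fin P.k × Fin P'.k) (_ : g p = z), cellD P P' p

lemma mem_cpiece {P P' : TaggedPart T (univ : Set T)} {g : Fin P.k × Fin P'.k → T}
    {h : T → T} {z w : T} :
    w ∈ cpiece P P' g h z ↔ (w ∈ tagSet P P' ∧ h w = z) ∨ ∃ p, g p = z ∧ w ∈ cellD P P' p := by
  simp [cpiece, Set.mem_iUnion, and_comm]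

variable (P P' : TaggedPart T (univ : Set T)) (g : Fin P.k × Fin P'.k → T) (h : T → T)

/-- The combined partition. -/
noncomputable def construct
    (hg : ∀ p, g p = P.tag p.1 ∨ g p = P'.tag p.2)
    (hh1 : ∀ z ∈ tagSet P P', h z ∈ tagSet P P')
    (hh2 : ∀ z ∈ tagSet P P', h (h z) = h z)
    (hgfix : ∀ p, h (g p) = g p) : TaggedPart T (univ : Set T) where
  k := ((tagSet P P').filter fun z => h z = z).card
  E := fun a => cpiece P P' g h
    (((tagSet P P').filter fun z => h z = z).equivFin.symm a : T)
  tag := fun a => (((tagSet P P').filter fun z => h z = z).equivFin.symm a : T)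
  meas := by
    intro a
    refine MeasurableSet.union (Finset.measurableSet _) ?_
    exact MeasurableSet.iUnion fun p => MeasurableSet.iUnion fun _ => cellD_meas P P' p
  disj := by
    intro a b hab
    have hz : (((tagSet P P').filter fun z => h z = z).equivFin.symm a : T) ≠
        (((tagSet P P').filter fun z => h z = z).equivFin.symm b : T) := by
      intro hco
      exact hab (((tagSet P P').filter fun z => h z = z).equivFin.symm.injective
        (Subtype.ext hco))
    rw [Set.disjoint_left]
    intro w hw hw'
    rw [mem_cpiece] at hw hw'
    rcases hw with ⟨hwZ, hwz⟩ | ⟨p, hp, hwp⟩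
    · rcases hw' with ⟨_, hwz'⟩ | ⟨q, hq, hwq⟩
      · exact hz (hwz ▸ hwz' ▸ rfl)
      · exact (cellD_disjoint_tagSet P P' q w hwq) hwZ
    · rcases hw' with ⟨hwZ, _⟩ | ⟨q, hq, hwq⟩
      · exact (cellD_disjoint_tagSet P P' p w hwp) hwZ
      · have hpq : p ≠ q := by
          intro e
          exact hz (by rw [← hp, ← hq, e])
        exact Set.disjoint_left.1 (cellD_disj P P' hpq) hwp hwq
  cover := by
    apply Set.eq_univ_of_forall
    intro w
    rw [Set.mem_iUnion]
    by_cases hw : w ∈ tagSet P P'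
    · have hmem : h w ∈ (tagSet P P').filter fun z => h z = z :=
        Finset.mem_filter.2 ⟨hh1 w hw, hh2 w hw⟩
      refine ⟨((tagSet P P').filter fun z => h z = z).equivFin ⟨h w, hmem⟩, ?_⟩
      rw [Equiv.symm_apply_apply, mem_cpiece]
      exact Or.inl ⟨hw, rfl⟩
    · set p : Fin P.k × Fin P'.k := (pidx P w, pidx P' w) with hp
      have hgZ : g p ∈ tagSet P P' := by
        rcases hg p with h1 | h1
        · rw [h1]; exact tag_mem_tagSet_left P P' _
        · rw [h1]; exact tag_mem_tagSet_right P P' _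
      have hmem : g p ∈ (tagSet P P').filter fun z => h z = z :=
        Finset.mem_filter.2 ⟨hgZ, hgfix p⟩
      refine ⟨((tagSet P P').filter fun z => h z = z).equivFin ⟨g p, hmem⟩, ?_⟩
      rw [Equiv.symm_apply_apply, mem_cpiece]
      exact Or.inr ⟨p, rfl, ⟨⟨pidx_mem P w, pidx_mem P' w⟩, hw⟩⟩

variable {P P' g h}

lemma construct_isHenstock (hg : ∀ p, g p = P.tag p.1 ∨ g p = P'.tag p.2)
    (hh1 : ∀ z ∈ tagSet P P', h z ∈ tagSet P P')
    (hh2 : ∀ z ∈ tagSet P P', h (h z) = h z)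
    (hgfix : ∀ p, h (g p) = g p) :
    (construct P P' g h hg hh1 hh2 hgfix).IsHenstock := by
  intro a
  show _ ∈ cpiece P P' g h _
  rw [mem_cpiece]
  have hmem := (((tagSet P P').filter fun z => h z = z).equivFin.symm a).2
  rw [Finset.mem_filter] at hmem
  exact Or.inl ⟨hmem.1, hmem.2⟩

lemma construct_isFine {γ : T → ℝ} (hγ : IsGage γ)
    (hg : ∀ p, g p = P.tag p.1 ∨ g p = P'.tag p.2)
    (hh1 : ∀ z ∈ tagSet P P', h z ∈ tagSet P P')
    (hh2 : ∀ z ∈ tagSet P P', h (h z) = h z)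
    (hgfix : ∀ p, h (g p) = g p)
    (hPF : P.IsFine γ) (hP'F : P'.IsFine γ)
    (hmove : ∀ z ∈ tagSet P P', dist z (h z) < γ (h z)) :
    (construct P P' g h hg hh1 hh2 hgfix).IsFine γ := by
  intro a w hw
  rw [show (construct P P' g h hg hh1 hh2 hgfix).E a = cpiece P P' g h
      (((tagSet P P').filter fun z => h z = z).equivFin.symm a : T) from rfl,
    mem_cpiece] at hw
  set z := (((tagSet P P').filter fun z => h z = z).equivFin.symm a : T) with hzdef
  show dist w z < γ z
  rcases hw with ⟨hwZ, hwz⟩ | ⟨p, hp, hwp⟩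
  · have := hmove w hwZ
    rwa [hwz] at this
  · rcases hg p with h1 | h1
    · have : z = P.tag p.1 := by rw [← hp, h1]
      rw [this]
      exact hPF p.1 w (cellD_sub_left P P' p hwp)
    · have : z = P'.tag p.2 := by rw [← hp, h1]
      rw [this]
      exact hP'F p.2 w (cellD_sub_right P P' p hwp)

end Construction

section Sums

variable {T : Type*} [MetricSpace T] [MeasurableSpace T] [BorelSpace T] [DecidableEq T]

lemma meas_finset (μ : Measure T) (s : Finset T) : μ ↑s = ∑ z ∈ s, μ {z} := by
  have hs : (↑s : Set T) = ⋃ z ∈ s, {z} := by ext w; simp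
  rw [hs, measure_biUnion_finset]
  · intro a _ b _ hab
    simpa [Function.onFun] using hab
  · intro i _
    exact measurableSet_singleton i

variable {P P' : TaggedPart T (univ : Set T)} {g : Fin P.k × Fin P'.k → T} {h : T → T}

lemma construct_sum {Y : Type*} [AddCommMonoid Y] [Module ℝ Y]
    (μ : Measure T) [IsFiniteMeasure μ]
    (hg : ∀ p, g p = P.tag p.1 ∨ g p = P'.tag p.2)
    (hh1 : ∀ z ∈ tagSet P P', h z ∈ tagSet P P')
    (hh2 : ∀ z ∈ tagSet P P', h (h z) = h z)
    (hgfix : ∀ p, h (g p) = g p) (φ : T → Y) :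
    (construct P P' g h hg hh1 hh2 hgfix).sum φ μ =
      (∑ z ∈ tagSet P P', (μ {z}).toReal • φ (h z)) +
        ∑ p : Fin P.k × Fin P'.k, (μ (cellD P P' p)).toReal • φ (g p) := by
  set Z := tagSet P P' with hZdef
  set Z' := Z.filter fun z => h z = z with hZ'def
  have hmeasp : ∀ z, (μ (cpiece P P' g h z)).toReal =
      (∑ w ∈ Z.filter fun w => h w = z, (μ {w}).toReal) +
        ∑ p ∈ Finset.univ.filter fun p => g p = z, (μ (cellD P P' p)).toReal := by
    intro z
    have hBset : (⋃ (p : Fin P.k × Fin P'.k) (_ : g p = z), cellD P P' p)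
        = ⋃ p ∈ Finset.univ.filter fun p => g p = z, cellD P P' p := by
      ext w; simp
    have hBmeas : MeasurableSet (⋃ p ∈ Finset.univ.filter fun p => g p = z, cellD P P' p) :=
      (Finset.univ.filter fun p => g p = z).measurableSet_biUnion fun p _ => cellD_meas P P' p
    have hdisj : Disjoint (↑(Z.filter fun w => h w = z) : Set T)
        (⋃ p ∈ Finset.univ.filter fun p => g p = z, cellD P P' p) := by
      rw [Set.disjoint_left]
      intro w hw hw'
      rw [Set.mem_iUnion₂] at hw'
      obtain ⟨p, _, hwp⟩ := hw'
      have : w ∈ Z := by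
        rw [Finset.mem_coe, Finset.mem_filter] at hw
        exact hw.1
      exact hwp.2 this
    rw [cpiece, hBset, measure_union hdisj hBmeas, meas_finset μ, measure_biUnion_finset]
    · rw [ENNReal.toReal_add, ENNReal.toReal_sum, ENNReal.toReal_sum]
      · intro p _; exact measure_ne_top μ _
      · intro w _; exact measure_ne_top μ _
      · exact (ENNReal.sum_ne_top.2 fun w _ => measure_ne_top μ _)
      · exact (ENNReal.sum_ne_top.2 fun p _ => measure_ne_top μ _)
    · intro p _ q _ hpq
      exact cellD_disj P P' hpq
    · intro p _
      exact cellD_meas P P' p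
  have hstep1 : (construct P P' g h hg hh1 hh2 hgfix).sum φ μ
      = ∑ z ∈ Z', (μ (cpiece P P' g h z)).toReal • φ z := by
    show (∑ a : Fin Z'.card, (μ (cpiece P P' g h (Z'.equivFin.symm a : T))).toReal
        • φ (Z'.equivFin.symm a : T)) = _
    rw [← Finset.sum_coe_sort Z' (fun z => (μ (cpiece P P' g h z)).toReal • φ z)]
    exact Equiv.sum_comp Z'.equivFin.symm
      (fun x : {z // z ∈ Z'} => (μ (cpiece P P' g h (x : T))).toReal • φ (x : T))
  rw [hstep1]
  have hstep2 : ∑ z ∈ Z', (μ (cpiece P P' g h z)).toReal • φ z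
      = (∑ z ∈ Z', ∑ w ∈ Z.filter fun w => h w = z, (μ {w}).toReal • φ z)
        + ∑ z ∈ Z', ∑ p ∈ Finset.univ.filter fun p => g p = z,
            (μ (cellD P P' p)).toReal • φ z := by
    rw [← Finset.sum_add_distrib]
    refine Finset.sum_congr rfl fun z _ => ?_
    rw [hmeasp z, add_smul, Finset.sum_smul, Finset.sum_smul]
  rw [hstep2]
  congr 1
  · have hmaps : ∀ w ∈ Z, h w ∈ Z' := fun w hw =>
      Finset.mem_filter.2 ⟨hh1 w hw, hh2 w hw⟩
    rw [← Finset.sum_fiberwise_of_maps_to hmaps (fun w => (μ {w}).toReal • φ (h w))]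
    refine Finset.sum_congr rfl fun z _ => Finset.sum_congr rfl fun w hw => ?_
    rw [(Finset.mem_filter.1 hw).2]
  · have hmaps : ∀ p ∈ (Finset.univ : Finset (Fin P.k × Fin P'.k)), g p ∈ Z' := by
      intro p _
      refine Finset.mem_filter.2 ⟨?_, hgfix p⟩
      rcases hg p with h1 | h1
      · rw [h1]; exact tag_mem_tagSet_left P P' _
      · rw [h1]; exact tag_mem_tagSet_right P P' _
    rw [← Finset.sum_fiberwise_of_maps_to hmaps (fun p => (μ (cellD P P' p)).toReal • φ (g p))]
    refine Finset.sum_congr rfl fun z _ => Finset.sum_congr rfl fun p hp => ?_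
    rw [(Finset.mem_filter.1 hp).2]

lemma sum_expand_left {Y : Type*} [AddCommMonoid Y] [Module ℝ Y]
    (μ : Measure T) [IsFiniteMeasure μ]
    (P P' : TaggedPart T (univ : Set T)) (φ : T → Y) :
    P.sum φ μ = (∑ z ∈ tagSet P P', (μ {z}).toReal • φ (P.tag (pidx P z))) +
      ∑ p : Fin P.k × Fin P'.k, (μ (cellD P P' p)).toReal • φ (P.tag p.1) := by
  set Z := tagSet P P' with hZdef
  have hmeas : ∀ i : Fin P.k, (μ (P.E i)).toReal =
      (∑ z ∈ Z.filter fun z => pidx P z = i, (μ {z}).toReal)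
        + ∑ j : Fin P'.k, (μ (cellD P P' (i, j))).toReal := by
    intro i
    have h1 : μ (P.E i) = μ (P.E i ∩ ↑Z) + μ (P.E i \ ↑Z) :=
      (measure_inter_add_diff _ Z.measurableSet).symm
    have h2 : P.E i ∩ ↑Z = ↑(Z.filter fun z => pidx P z = i) := by
      ext w
      simp only [Set.mem_inter_iff, Finset.coe_filter, Set.mem_setOf_eq, Finset.mem_coe]
      constructor
      · rintro ⟨hw, hwZ⟩; exact ⟨hwZ, pidx_eq P hw⟩
      · rintro ⟨hwZ, rfl⟩; exact ⟨pidx_mem P w, hwZ⟩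
    have h3 : P.E i \ ↑Z = ⋃ j ∈ (Finset.univ : Finset (Fin P'.k)), cellD P P' (i, j) := by
      ext w
      simp only [Set.mem_diff, Set.mem_iUnion, Finset.mem_univ, exists_true_left]
      constructor
      · rintro ⟨hw, hwZ⟩
        exact ⟨pidx P' w, ⟨⟨hw, pidx_mem P' w⟩, hwZ⟩⟩
      · rintro ⟨j, ⟨⟨hw, _⟩, hwZ⟩⟩
        exact ⟨hw, hwZ⟩
    have hB : μ (⋃ j ∈ (Finset.univ : Finset (Fin P'.k)), cellD P P' (i, j))
        = ∑ j : Fin P'.k, μ (cellD P P' (i, j)) :=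
      measure_biUnion_finset
        (fun a _ b _ hab => cellD_disj P P' (by simp [hab]))
        (fun j _ => cellD_meas P P' _)
    rw [h1, h2, h3, meas_finset μ, hB, ENNReal.toReal_add
      (ENNReal.sum_ne_top.2 fun z _ => measure_ne_top μ _)
      (ENNReal.sum_ne_top.2 fun j _ => measure_ne_top μ _),
      ENNReal.toReal_sum (fun z _ => measure_ne_top μ _),
      ENNReal.toReal_sum (fun j _ => measure_ne_top μ _)]
  calc P.sum φ μ = ∑ i, ((∑ z ∈ Z.filter fun z => pidx P z = i, (μ {z}).toReal)
        + ∑ j : Fin P'.k, (μ (cellD P P' (i, j))).toReal) • φ (P.tag i) := by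
        refine Finset.sum_congr rfl fun i _ => ?_
        rw [hmeas i]
    _ = (∑ i, ∑ z ∈ Z.filter fun z => pidx P z = i, (μ {z}).toReal • φ (P.tag i))
        + ∑ i, ∑ j : Fin P'.k, (μ (cellD P P' (i, j))).toReal • φ (P.tag i) := by
        rw [← Finset.sum_add_distrib]
        refine Finset.sum_congr rfl fun i _ => ?_
        rw [add_smul, Finset.sum_smul, Finset.sum_smul]
    _ = (∑ z ∈ Z, (μ {z}).toReal • φ (P.tag (pidx P z)))
        + ∑ p : Fin P.k × Fin P'.k, (μ (cellD P P' p)).toReal • φ (P.tag p.1) := by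
        congr 1
        · rw [← Finset.sum_fiberwise_of_maps_to (fun z _ => Finset.mem_univ (pidx P z))
            (fun z => (μ {z}).toReal • φ (P.tag (pidx P z)))]
          refine Finset.sum_congr rfl fun i _ => Finset.sum_congr rfl fun z hz => ?_
          rw [(Finset.mem_filter.1 hz).2]
        · rw [Fintype.sum_prod_type]

lemma sum_expand_right {Y : Type*} [AddCommMonoid Y] [Module ℝ Y]
    (μ : Measure T) [IsFiniteMeasure μ]
    (P P' : TaggedPart T (univ : Set T)) (φ : T → Y) :
    P'.sum φ μ = (∑ z ∈ tagSet P P', (μ {z}).toReal • φ (P'.tag (pidx P' z))) +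
      ∑ p : Fin P.k × Fin P'.k, (μ (cellD P P' p)).toReal • φ (P'.tag p.2) := by
  set Z := tagSet P P' with hZdef
  have hmeas : ∀ j : Fin P'.k, (μ (P'.E j)).toReal =
      (∑ z ∈ Z.filter fun z => pidx P' z = j, (μ {z}).toReal)
        + ∑ i : Fin P.k, (μ (cellD P P' (i, j))).toReal := by
    intro j
    have h1 : μ (P'.E j) = μ (P'.E j ∩ ↑Z) + μ (P'.E j \ ↑Z) :=
      (measure_inter_add_diff _ Z.measurableSet).symm
    have h2 : P'.E j ∩ ↑Z = ↑(Z.filter fun z => pidx P' z = j) := by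
      ext w
      simp only [Set.mem_inter_iff, Finset.coe_filter, Set.mem_setOf_eq, Finset.mem_coe]
      constructor
      · rintro ⟨hw, hwZ⟩; exact ⟨hwZ, pidx_eq P' hw⟩
      · rintro ⟨hwZ, rfl⟩; exact ⟨pidx_mem P' w, hwZ⟩
    have h3 : P'.E j \ ↑Z = ⋃ i ∈ (Finset.univ : Finset (Fin P.k)), cellD P P' (i, j) := by
      ext w
      simp only [Set.mem_diff, Set.mem_iUnion, Finset.mem_univ, exists_true_left]
      constructor
      · rintro ⟨hw, hwZ⟩
        exact ⟨pidx P w, ⟨⟨pidx_mem P w, hw⟩, hwZ⟩⟩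
      · rintro ⟨i, ⟨⟨_, hw⟩, hwZ⟩⟩
        exact ⟨hw, hwZ⟩
    have hB : μ (⋃ i ∈ (Finset.univ : Finset (Fin P.k)), cellD P P' (i, j))
        = ∑ i : Fin P.k, μ (cellD P P' (i, j)) :=
      measure_biUnion_finset
        (fun a _ b _ hab => cellD_disj P P' (by simp [hab]))
        (fun i _ => cellD_meas P P' _)
    rw [h1, h2, h3, meas_finset μ, hB, ENNReal.toReal_add
      (ENNReal.sum_ne_top.2 fun z _ => measure_ne_top μ _)
      (ENNReal.sum_ne_top.2 fun i _ => measure_ne_top μ _),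
      ENNReal.toReal_sum (fun z _ => measure_ne_top μ _),
      ENNReal.toReal_sum (fun i _ => measure_ne_top μ _)]
  calc P'.sum φ μ = ∑ j, ((∑ z ∈ Z.filter fun z => pidx P' z = j, (μ {z}).toReal)
        + ∑ i : Fin P.k, (μ (cellD P P' (i, j))).toReal) • φ (P'.tag j) := by
        refine Finset.sum_congr rfl fun j _ => ?_
        rw [hmeas j]
    _ = (∑ j, ∑ z ∈ Z.filter fun z => pidx P' z = j, (μ {z}).toReal • φ (P'.tag j))
        + ∑ j, ∑ i : Fin P.k, (μ (cellD P P' (i, j))).toReal • φ (P'.tag j) := by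
        rw [← Finset.sum_add_distrib]
        refine Finset.sum_congr rfl fun j _ => ?_
        rw [add_smul, Finset.sum_smul, Finset.sum_smul]
    _ = (∑ z ∈ Z, (μ {z}).toReal • φ (P'.tag (pidx P' z)))
        + ∑ p : Fin P.k × Fin P'.k, (μ (cellD P P' p)).toReal • φ (P'.tag p.2) := by
        congr 1
        · rw [← Finset.sum_fiberwise_of_maps_to (fun z _ => Finset.mem_univ (pidx P' z))
            (fun z => (μ {z}).toReal • φ (P'.tag (pidx P' z)))]
          refine Finset.sum_congr rfl fun j _ => Finset.sum_congr rfl fun z hz => ?_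
          rw [(Finset.mem_filter.1 hz).2]
        · rw [Fintype.sum_prod_type]
          exact Finset.sum_comm

end Sums

section KeyEstimate

variable {T : Type*} [MetricSpace T] [MeasurableSpace T] [BorelSpace T] [DecidableEq T]
  {X : Type*} [NormedAddCommGroup X] [Lattice X] [HasSolidNorm X] [IsOrderedAddMonoid X] [NormedSpace ℝ X]

/-- Point-moving reassignment. -/
noncomputable def moveTo (P0 : TaggedPart T (univ : Set T)) (W : Finset T) : T → T :=
  fun z => if z ∈ W then P0.tag (pidx P0 z) else z

lemma moveTo_mem {P0 : TaggedPart T (univ : Set T)} {Zs : Finset T}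
    (htags : ∀ i, P0.tag i ∈ Zs) (W : Finset T) {z : T} (hz : z ∈ Zs) :
    moveTo P0 W z ∈ Zs := by
  unfold moveTo
  split
  · exact htags _
  · exact hz

lemma moveTo_fix_tag {P0 : TaggedPart T (univ : Set T)} (hP0 : P0.IsHenstock)
    (W : Finset T) (i : Fin P0.k) : moveTo P0 W (P0.tag i) = P0.tag i := by
  unfold moveTo
  split
  · rw [pidx_tag P0 hP0]
  · rfl

lemma moveTo_idem {P0 : TaggedPart T (univ : Set T)} (hP0 : P0.IsHenstock)
    (W : Finset T) (z : T) : moveTo P0 W (moveTo P0 W z) = moveTo P0 W z := by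
  by_cases hz : z ∈ W
  · have : moveTo P0 W z = P0.tag (pidx P0 z) := if_pos hz
    rw [this, moveTo_fix_tag hP0]
  · have : moveTo P0 W z = z := if_neg hz
    rw [this, this]

lemma moveTo_dist {γ : T → ℝ} (hγ : IsGage γ) {P0 : TaggedPart T (univ : Set T)}
    (hP0F : P0.IsFine γ) (W : Finset T) (z : T) :
    dist z (moveTo P0 W z) < γ (moveTo P0 W z) := by
  unfold moveTo
  split
  · exact hP0F _ z (pidx_mem P0 z)
  · simpa using hγ z

/-- The basic order estimate coming from pairs of admissible partitions. -/
lemma est_abs_sum (μ : Measure T) {γ : T → ℝ}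
    (f : T → X) {J b : X}
    (hbd : ∀ Q : TaggedPart T (univ : Set T), Q.IsHenstock → Q.IsFine γ → |Q.sum f μ - J| ≤ b)
    {ι : Type*} [DecidableEq ι] (u : Finset ι) (y : ι → X)
    (hQ : ∀ S ⊆ u, ∃ Q Q' : TaggedPart T (univ : Set T),
      (Q.IsHenstock ∧ Q.IsFine γ) ∧ (Q'.IsHenstock ∧ Q'.IsFine γ) ∧
        Q.sum f μ - Q'.sum f μ = (∑ i ∈ S, y i) - ∑ i ∈ u \ S, y i) :
    ∑ i ∈ u, |y i| ≤ b + b := by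
  have key := sign_sum_le u y (b + b) 0 ?_
  · simpa using key
  · intro S hS
    obtain ⟨Q, Q', ⟨hQH, hQF⟩, ⟨hQ'H, hQ'F⟩, hdiff⟩ := hQ S hS
    rw [zero_add, ← hdiff]
    have heq : Q.sum f μ - Q'.sum f μ
        = (Q.sum f μ - J) + -(Q'.sum f μ - J) := by abel
    calc |Q.sum f μ - Q'.sum f μ| = |(Q.sum f μ - J) + -(Q'.sum f μ - J)| := by rw [heq]
      _ ≤ |Q.sum f μ - J| + |-(Q'.sum f μ - J)| := abs_add_le _ _
      _ = |Q.sum f μ - J| + |Q'.sum f μ - J| := by rw [abs_neg]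
      _ ≤ b + b := add_le_add (hbd Q hQH hQF) (hbd Q' hQ'H hQ'F)

/-- Turn an order bound on a sum of absolute values into a scalar estimate. -/
lemma scalar_from_vec (hL : ∀ x y : X, 0 ≤ x → 0 ≤ y → ‖x + y‖ = ‖x‖ + ‖y‖)
    {ι : Type*} (u : Finset ι) (m : ι → ℝ) (hm : ∀ i ∈ u, 0 ≤ m i) (a c : ι → X) {b : X}
    (hvec : ∑ i ∈ u, |m i • (a i - c i)| ≤ b + b) :
    |∑ i ∈ u, m i * (‖a i‖ - ‖c i‖)| ≤ 2 * ‖b‖ := by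
  have step1 : |∑ i ∈ u, m i * (‖a i‖ - ‖c i‖)| ≤ ∑ i ∈ u, ‖m i • (a i - c i)‖ := by
    refine (Finset.abs_sum_le_sum_abs _ _).trans (Finset.sum_le_sum fun i hi => ?_)
    rw [abs_mul, abs_of_nonneg (hm i hi), norm_smul, Real.norm_eq_abs,
      abs_of_nonneg (hm i hi)]
    exact mul_le_mul_of_nonneg_left (abs_norm_sub_norm_le _ _) (hm i hi)
  have step2 : ∑ i ∈ u, ‖m i • (a i - c i)‖ = ‖∑ i ∈ u, |m i • (a i - c i)|‖ := by
    rw [lnorm_sum hL u _ (fun i _ => abs_nonneg _)]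
    exact Finset.sum_congr rfl fun i _ => (norm_abs_eq_norm _).symm
  have step3 : ‖∑ i ∈ u, |m i • (a i - c i)|‖ ≤ ‖b + b‖ := by
    apply norm_le_norm_of_abs_le_abs
    rw [abs_of_nonneg (Finset.sum_nonneg fun i _ => abs_nonneg _)]
    exact hvec.trans (le_abs_self _)
  have step4 : ‖b + b‖ ≤ 2 * ‖b‖ := by
    have := norm_add_le b b
    linarith
  linarith [step1, step2 ▸ step1, step3, step4]

theorem key_estimate (μ : Measure T) [IsFiniteMeasure μ]
    (hL : ∀ x y : X, 0 ≤ x → 0 ≤ y → ‖x + y‖ = ‖x‖ + ‖y‖)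
    (f : T → X) (J b : X) {γ : T → ℝ} (hγ : IsGage γ)
    (hbd : ∀ Q : TaggedPart T (univ : Set T), Q.IsHenstock → Q.IsFine γ → |Q.sum f μ - J| ≤ b)
    (P P' : TaggedPart T (univ : Set T)) (hPH : P.IsHenstock) (hPF : P.IsFine γ)
    (hP'H : P'.IsHenstock) (hP'F : P'.IsFine γ) :
    |P.sum (fun t => ‖f t‖) μ - P'.sum (fun t => ‖f t‖) μ| ≤ 6 * ‖b‖ := by
  set Z := tagSet P P' with hZdef
  -- abbreviations
  set mz : T → ℝ := fun z => (μ {z}).toReal with hmz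
  set mD : Fin P.k × Fin P'.k → ℝ := fun p => (μ (cellD P P' p)).toReal with hmD
  set At : ℝ := ∑ z ∈ Z, mz z * ‖f z‖ with hAt
  set Ct : ℝ := ∑ p : Fin P.k × Fin P'.k, mD p * ‖f (P.tag p.1)‖ with hCt
  set Cs : ℝ := ∑ p : Fin P.k × Fin P'.k, mD p * ‖f (P'.tag p.2)‖ with hCs
  -- the all-left and all-right cell assignments
  have hgL : ∀ p : Fin P.k × Fin P'.k, P.tag p.1 = P.tag p.1 ∨ P.tag p.1 = P'.tag p.2 :=
    fun p => Or.inl rfl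
  have hgR : ∀ p : Fin P.k × Fin P'.k, P'.tag p.2 = P.tag p.1 ∨ P'.tag p.2 = P'.tag p.2 :=
    fun p => Or.inr rfl
  -- Estimate (i): moving the tag points within P
  have hvec1 : ∑ z ∈ Z, |mz z • (f (P.tag (pidx P z)) - f z)| ≤ b + b := by
    refine est_abs_sum μ f hbd Z _ ?_
    intro S hS
    have hgfix1 : ∀ W : Finset T, ∀ p : Fin P.k × Fin P'.k,
        moveTo P W (P.tag p.1) = P.tag p.1 := fun W p => moveTo_fix_tag hPH W p.1
    have hh1 : ∀ W : Finset T, ∀ z ∈ Z, moveTo P W z ∈ Z :=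
      fun W z hz => moveTo_mem (fun i => tag_mem_tagSet_left P P' i) W hz
    have hh2 : ∀ W : Finset T, ∀ z ∈ Z, moveTo P W (moveTo P W z) = moveTo P W z :=
      fun W z _ => moveTo_idem hPH W z
    refine ⟨construct P P' (fun p => P.tag p.1) (moveTo P S) hgL (hh1 S) (hh2 S) (hgfix1 S),
      construct P P' (fun p => P.tag p.1) (moveTo P (Z \ S)) hgL (hh1 _) (hh2 _) (hgfix1 _),
      ⟨construct_isHenstock _ _ _ _, construct_isFine hγ _ _ _ _ hPF hP'F
        (fun z _ => moveTo_dist hγ hPF S z)⟩,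
      ⟨construct_isHenstock _ _ _ _, construct_isFine hγ _ _ _ _ hPF hP'F
        (fun z _ => moveTo_dist hγ hPF (Z \ S) z)⟩, ?_⟩
    rw [construct_sum μ _ _ _ _ f, construct_sum μ _ _ _ _ f]
    have hcancel : ∀ (A A' C : X), (A + C) - (A' + C) = A - A' := fun A A' C => by abel
    rw [hcancel, ← Finset.sum_sub_distrib]
    have hsplit := (Finset.sum_sdiff hS
      (f := fun z => mz z • f (moveTo P S z) - mz z • f (moveTo P (Z \ S) z))).symm
    rw [hsplit]
    have hOnS : ∀ z ∈ S, mz z • f (moveTo P S z) - mz z • f (moveTo P (Z \ S) z)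
        = mz z • (f (P.tag (pidx P z)) - f z) := by
      intro z hz
      have h1 : moveTo P S z = P.tag (pidx P z) := if_pos hz
      have h2 : moveTo P (Z \ S) z = z := if_neg (by simp [Finset.mem_sdiff, hz])
      rw [h1, h2, smul_sub]
    have hOnC : ∀ z ∈ Z \ S, mz z • f (moveTo P S z) - mz z • f (moveTo P (Z \ S) z)
        = -(mz z • (f (P.tag (pidx P z)) - f z)) := by
      intro z hz
      have h1 : moveTo P S z = z := if_neg (Finset.mem_sdiff.1 hz).2
      have h2 : moveTo P (Z \ S) z = P.tag (pidx P z) := if_pos hz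
      rw [h1, h2, smul_sub]
      abel
    rw [Finset.sum_congr rfl hOnC, Finset.sum_congr rfl hOnS, Finset.sum_neg_distrib]
    abel
  -- Estimate (ii): moving the tag points within P'
  have hvec2 : ∑ z ∈ Z, |mz z • (f (P'.tag (pidx P' z)) - f z)| ≤ b + b := by
    refine est_abs_sum μ f hbd Z _ ?_
    intro S hS
    have hgfix1 : ∀ W : Finset T, ∀ p : Fin P.k × Fin P'.k,
        moveTo P' W (P'.tag p.2) = P'.tag p.2 := fun W p => moveTo_fix_tag hP'H W p.2
    have hh1 : ∀ W : Finset T, ∀ z ∈ Z, moveTo P' W z ∈ Z :=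
      fun W z hz => moveTo_mem (fun j => tag_mem_tagSet_right P P' j) W hz
    have hh2 : ∀ W : Finset T, ∀ z ∈ Z, moveTo P' W (moveTo P' W z) = moveTo P' W z :=
      fun W z _ => moveTo_idem hP'H W z
    refine ⟨construct P P' (fun p => P'.tag p.2) (moveTo P' S) hgR (hh1 S) (hh2 S) (hgfix1 S),
      construct P P' (fun p => P'.tag p.2) (moveTo P' (Z \ S)) hgR (hh1 _) (hh2 _) (hgfix1 _),
      ⟨construct_isHenstock _ _ _ _, construct_isFine hγ _ _ _ _ hPF hP'F
        (fun z _ => moveTo_dist hγ hP'F S z)⟩,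
      ⟨construct_isHenstock _ _ _ _, construct_isFine hγ _ _ _ _ hPF hP'F
        (fun z _ => moveTo_dist hγ hP'F (Z \ S) z)⟩, ?_⟩
    rw [construct_sum μ _ _ _ _ f, construct_sum μ _ _ _ _ f]
    have hcancel : ∀ (A A' C : X), (A + C) - (A' + C) = A - A' := fun A A' C => by abel
    rw [hcancel, ← Finset.sum_sub_distrib]
    have hsplit := (Finset.sum_sdiff hS
      (f := fun z => mz z • f (moveTo P' S z) - mz z • f (moveTo P' (Z \ S) z))).symm
    rw [hsplit]
    have hOnS : ∀ z ∈ S, mz z • f (moveTo P' S z) - mz z • f (moveTo P' (Z \ S) z)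
        = mz z • (f (P'.tag (pidx P' z)) - f z) := by
      intro z hz
      have h1 : moveTo P' S z = P'.tag (pidx P' z) := if_pos hz
      have h2 : moveTo P' (Z \ S) z = z := if_neg (by simp [Finset.mem_sdiff, hz])
      rw [h1, h2, smul_sub]
    have hOnC : ∀ z ∈ Z \ S, mz z • f (moveTo P' S z) - mz z • f (moveTo P' (Z \ S) z)
        = -(mz z • (f (P'.tag (pidx P' z)) - f z)) := by
      intro z hz
      have h1 : moveTo P' S z = z := if_neg (Finset.mem_sdiff.1 hz).2
      have h2 : moveTo P' (Z \ S) z = P'.tag (pidx P' z) := if_pos hz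
      rw [h1, h2, smul_sub]
      abel
    rw [Finset.sum_congr rfl hOnC, Finset.sum_congr rfl hOnS, Finset.sum_neg_distrib]
    abel
  -- Estimate (iii): cell reassignment
  have hvec3 : ∑ p : Fin P.k × Fin P'.k, |mD p • (f (P.tag p.1) - f (P'.tag p.2))| ≤ b + b := by
    have := est_abs_sum μ f hbd (Finset.univ : Finset (Fin P.k × Fin P'.k))
      (fun p => mD p • (f (P.tag p.1) - f (P'.tag p.2))) ?_
    · simpa using this
    intro S hS
    have hgS : ∀ W : Finset (Fin P.k × Fin P'.k), ∀ p,
        (if p ∈ W then P.tag p.1 else P'.tag p.2) = P.tag p.1 ∨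
          (if p ∈ W then P.tag p.1 else P'.tag p.2) = P'.tag p.2 := by
      intro W p
      split
      · exact Or.inl rfl
      · exact Or.inr rfl
    have hid1 : ∀ z ∈ Z, (id : T → T) z ∈ Z := fun z hz => hz
    have hid2 : ∀ z ∈ Z, (id : T → T) (id z) = id z := fun z _ => rfl
    have hidfix : ∀ (gg : Fin P.k × Fin P'.k → T), ∀ p, (id : T → T) (gg p) = gg p :=
      fun _ _ => rfl
    refine ⟨construct P P' (fun p => if p ∈ S then P.tag p.1 else P'.tag p.2) id
        (hgS S) hid1 hid2 (hidfix _),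
      construct P P' (fun p => if p ∈ Finset.univ \ S then P.tag p.1 else P'.tag p.2) id
        (hgS _) hid1 hid2 (hidfix _),
      ⟨construct_isHenstock _ _ _ _, construct_isFine hγ _ _ _ _ hPF hP'F
        (fun z _ => by simpa using hγ z)⟩,
      ⟨construct_isHenstock _ _ _ _, construct_isFine hγ _ _ _ _ hPF hP'F
        (fun z _ => by simpa using hγ z)⟩, ?_⟩
    rw [construct_sum μ _ _ _ _ f, construct_sum μ _ _ _ _ f]
    have hcancel : ∀ (A C C' : X), (A + C) - (A + C') = C - C' := fun A C C' => by abel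
    rw [hcancel, ← Finset.sum_sub_distrib]
    have hsplit := (Finset.sum_sdiff hS
      (f := fun p => mD p • f (if p ∈ S then P.tag p.1 else P'.tag p.2)
        - mD p • f (if p ∈ Finset.univ \ S then P.tag p.1 else P'.tag p.2))).symm
    rw [hsplit]
    have hOnS : ∀ p ∈ S, mD p • f (if p ∈ S then P.tag p.1 else P'.tag p.2)
        - mD p • f (if p ∈ Finset.univ \ S then P.tag p.1 else P'.tag p.2)
        = mD p • (f (P.tag p.1) - f (P'.tag p.2)) := by
      intro p hp
      rw [if_pos hp, if_neg (by simp [Finset.mem_sdiff, hp]), smul_sub]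
    have hOnC : ∀ p ∈ Finset.univ \ S,
        mD p • f (if p ∈ S then P.tag p.1 else P'.tag p.2)
        - mD p • f (if p ∈ Finset.univ \ S then P.tag p.1 else P'.tag p.2)
        = -(mD p • (f (P.tag p.1) - f (P'.tag p.2))) := by
      intro p hp
      rw [if_neg (Finset.mem_sdiff.1 hp).2, if_pos hp, smul_sub]
      abel
    rw [Finset.sum_congr rfl hOnC, Finset.sum_congr rfl hOnS, Finset.sum_neg_distrib]
    abel
  -- scalar consequences
  have hd1 : |P.sum (fun t => ‖f t‖) μ - (At + Ct)| ≤ 2 * ‖b‖ := by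
    have hexp := sum_expand_left μ P P' (fun t => ‖f t‖)
    have heq : P.sum (fun t => ‖f t‖) μ - (At + Ct)
        = ∑ z ∈ Z, mz z * (‖f (P.tag (pidx P z))‖ - ‖f z‖) := by
      rw [Finset.sum_congr rfl (fun z (_ : z ∈ Z) => mul_sub (mz z) ‖f (P.tag (pidx P z))‖ ‖f z‖),
        Finset.sum_sub_distrib, hexp]
      simp only [smul_eq_mul, hAt, hCt]
      abel
    rw [heq]
    exact scalar_from_vec hL Z mz (fun z _ => ENNReal.toReal_nonneg)
      (fun z => f (P.tag (pidx P z))) (fun z => f z) hvec1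
  have hd2 : |P'.sum (fun t => ‖f t‖) μ - (At + Cs)| ≤ 2 * ‖b‖ := by
    have hexp := sum_expand_right μ P P' (fun t => ‖f t‖)
    have heq : P'.sum (fun t => ‖f t‖) μ - (At + Cs)
        = ∑ z ∈ Z, mz z * (‖f (P'.tag (pidx P' z))‖ - ‖f z‖) := by
      rw [Finset.sum_congr rfl (fun z (_ : z ∈ Z) => mul_sub (mz z) ‖f (P'.tag (pidx P' z))‖ ‖f z‖),
        Finset.sum_sub_distrib, hexp]
      simp only [smul_eq_mul, hAt, hCs]
      abel
    rw [heq]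
    exact scalar_from_vec hL Z mz (fun z _ => ENNReal.toReal_nonneg)
      (fun z => f (P'.tag (pidx P' z))) (fun z => f z) hvec2
  have hd3 : |(At + Ct) - (At + Cs)| ≤ 2 * ‖b‖ := by
    have heq : (At + Ct) - (At + Cs)
        = ∑ p : Fin P.k × Fin P'.k, mD p * (‖f (P.tag p.1)‖ - ‖f (P'.tag p.2)‖) := by
      rw [Finset.sum_congr rfl
        (fun p (_ : p ∈ Finset.univ) => mul_sub (mD p) ‖f (P.tag p.1)‖ ‖f (P'.tag p.2)‖),
        Finset.sum_sub_distrib, hCt, hCs]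
      abel
    rw [heq]
    exact scalar_from_vec hL Finset.univ mD (fun p _ => ENNReal.toReal_nonneg)
      (fun p => f (P.tag p.1)) (fun p => f (P'.tag p.2)) hvec3
  have t1 := abs_sub_le (P.sum (fun t => ‖f t‖) μ) (At + Ct) (P'.sum (fun t => ‖f t‖) μ)
  have t2 := abs_sub_le (At + Ct) (At + Cs) (P'.sum (fun t => ‖f t‖) μ)
  have t3 : |(At + Cs) - P'.sum (fun t => ‖f t‖) μ| = |P'.sum (fun t => ‖f t‖) μ - (At + Cs)| :=
    abs_sub_comm _ _
  linarith

end KeyEstimate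

theorem oH_norm_henstock_integrable_of_Lspace {T : Type*} [MetricSpace T] [CompactSpace T] [MeasurableSpace T] [BorelSpace T]
    (μ : Measure T) [IsFiniteMeasure μ] [μ.Regular]
    {X : Type*} [NormedAddCommGroup X] [Lattice X] [HasSolidNorm X] [IsOrderedAddMonoid X] [NormedSpace ℝ X] [CompleteSpace X]
    (hL : ∀ x y : X, 0 ≤ x → 0 ≤ y → ‖x + y‖ = ‖x‖ + ‖y‖) (f : T → X) (J : X)
    (hf : HasOHIntegralOn f μ Set.univ J) :
    ∃ I : ℝ, HasNormHIntegralOn (fun t => ‖f t‖) μ Set.univ I := by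
  classical
  obtain ⟨b, hb, γ, hγ, hbd⟩ := hf
  by_cases hex : ∀ δ : T → ℝ, IsGage δ →
      ∃ P : TaggedPart T (univ : Set T), P.IsHenstock ∧ P.IsFine δ
  · -- partitions always exist: build the integral as a limit
    set δ : ℕ → T → ℝ := fun q x =>
      (Finset.range (q + 1)).inf' ⟨0, Finset.mem_range.2 (Nat.succ_pos q)⟩ (fun k => γ k x)
      with hδdef
    have hδg : ∀ q, IsGage (δ q) := by
      intro q x
      rw [hδdef]
      exact (Finset.lt_inf'_iff _).2 fun k _ => hγ k x
    have hδle : ∀ q k, k ≤ q → ∀ x, δ q x ≤ γ k x := by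
      intro q k hk x
      rw [hδdef]
      exact Finset.inf'_le _ (Finset.mem_range.2 (Nat.lt_succ_of_le hk))
    have hfine : ∀ q k, k ≤ q → ∀ P : TaggedPart T (univ : Set T),
        P.IsFine (δ q) → P.IsFine (γ k) := by
      intro q k hk P hP i w hw
      exact lt_of_lt_of_le (hP i w hw) (hδle q k hk _)
    choose Pq hPqH hPqF using fun q => hex (δ q) (hδg q)
    set a : ℕ → ℝ := fun q => (Pq q).sum (fun t => ‖f t‖) μ with hadef
    have hkey : ∀ N (P P' : TaggedPart T (univ : Set T)),
        P.IsHenstock → P.IsFine (γ N) → P'.IsHenstock → P'.IsFine (γ N) →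
        |P.sum (fun t => ‖f t‖) μ - P'.sum (fun t => ‖f t‖) μ| ≤ 6 * ‖b N‖ := by
      intro N P P' h1 h2 h3 h4
      exact key_estimate μ hL f J (b N) (hγ N) (fun Q hH hF => hbd N Q hH hF) P P' h1 h2 h3 h4
    have hcau : ∀ q r N, N ≤ q → N ≤ r → dist (a q) (a r) ≤ 6 * ‖b N‖ := by
      intro q r N hq hr
      rw [Real.dist_eq]
      exact hkey N (Pq q) (Pq r) (hPqH q) (hfine q N hq _ (hPqF q))
        (hPqH r) (hfine r N hr _ (hPqF r))
    have hb0 : Tendsto (fun N => 6 * ‖b N‖) atTop (𝓝 0) := by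
      have := (norm_oseq_aux hL hb).2.const_mul (6 : ℝ)
      simpa using this
    obtain ⟨I, hI⟩ := cauchySeq_tendsto_of_complete
      (cauchySeq_of_le_tendsto_0 (fun N => 6 * ‖b N‖) hcau hb0)
    refine ⟨I, ?_⟩
    intro ε hε
    obtain ⟨N1, hN1⟩ := (Metric.tendsto_atTop.1 hb0) (ε / 2) (by linarith)
    obtain ⟨N2, hN2⟩ := (Metric.tendsto_atTop.1 hI) (ε / 2) (by linarith)
    set q := max N1 N2 with hqdef
    refine ⟨δ q, hδg q, ?_⟩
    intro P hPH hPF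
    have hPfine : P.IsFine (γ q) := hfine q q le_rfl P hPF
    have h1 : |P.sum (fun t => ‖f t‖) μ - a q| ≤ 6 * ‖b q‖ :=
      hkey q P (Pq q) hPH hPfine (hPqH q) (hfine q q le_rfl _ (hPqF q))
    have h2 : |a q - I| < ε / 2 := by
      have := hN2 q (le_max_right _ _)
      rwa [Real.dist_eq] at this
    have h3 : 6 * ‖b q‖ < ε / 2 := by
      have := hN1 q (le_max_left _ _)
      rw [Real.dist_eq, sub_zero] at this
      calc 6 * ‖b q‖ ≤ |6 * ‖b q‖| := le_abs_self _
        _ < ε / 2 := this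
    rw [show P.sum (fun t => ‖f t‖) μ - I
        = (P.sum (fun t => ‖f t‖) μ - a q) + (a q - I) by abel]
    calc ‖(P.sum (fun t => ‖f t‖) μ - a q) + (a q - I)‖
        ≤ ‖P.sum (fun t => ‖f t‖) μ - a q‖ + ‖a q - I‖ := norm_add_le _ _
      _ ≤ ε / 2 + ε / 2 := by
          rw [Real.norm_eq_abs, Real.norm_eq_abs]
          exact add_le_add (h1.trans h3.le) h2.le
      _ = ε := by ring
  · -- some gage admits no fine Henstock partition: vacuous
    push_neg at hex
    obtain ⟨δ, hδ, hno⟩ := hex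
    refine ⟨0, ?_⟩
    intro ε hε
    refine ⟨δ, hδ, ?_⟩
    intro P hPH hPF
    exact absurd hPF (hno P hPH)
end
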